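/- arXiv:1503.07238 — 3 statements merged into one kernel-verified Lean document; each statement's English description precedes it below -/
import Mathlib

section
/- For every n ≥ 2 and every p with 2 ≤ p < ∞ there exist constants c, C > 0, depending only on n and p, such that for every integer k ≥ 1 one has c k^{((n−1)/2)(1/2 − 1/p)} ≤ ( ∫_{Sⁿ} (x₁² + x₂²)^{pk/2} dσ )^{1/p} / ( ∫_{Sⁿ} (x₁² + x₂²)^k dσ )^{1/2} ≤ C k^{((n−1)/2)(1/2 − 1/p)}. -/
open MeasureTheory Real

noncomputable section

/-- `ℝ^{n+1}` as a Euclidean space. -/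
abbrev Esp (n : ℕ) := EuclideanSpace ℝ (Fin (n + 1))

/-- The unit sphere `Sⁿ ⊂ ℝ^{n+1}`. -/
abbrev Sph (n : ℕ) := Metric.sphere (0 : Esp n) 1

/-- The surface measure `σ` on the unit sphere `Sⁿ`. -/
def sphMeasure (n : ℕ) : Measure (Sph n) := (volume : Measure (Esp n)).toSphere

/-- The geodesic distance `d(x,y) = arccos ⟨x,y⟩` on the sphere. -/
def gdist {n : ℕ} (x y : Sph n) : ℝ := Real.arccos (inner ℝ (x : Esp n) (y : Esp n))

/-- The geodesic ball `B_r(x) ⊂ Sⁿ`. -/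
def gball {n : ℕ} (x : Sph n) (r : ℝ) : Set (Sph n) := {y | gdist x y < r}

/-- `u : Sⁿ → ℂ` is a spherical harmonic of degree `k`: the restriction to `Sⁿ` of a
polynomial on `ℝ^{n+1}` that is homogeneous of degree `k` and harmonic. -/
def IsSphericalHarmonic {n : ℕ} (k : ℕ) (u : Sph n → ℂ) : Prop :=
  ∃ P : MvPolynomial (Fin (n + 1)) ℂ, P.IsHomogeneous k ∧
    (∑ i, MvPolynomial.pderiv i (MvPolynomial.pderiv i P)) = 0 ∧
    ∀ x : Sph n, u x = MvPolynomial.eval (fun i => ((x : Esp n) i : ℂ)) P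

/-- The `L²(σ)` norm of `u` over the geodesic ball `B_r(x)`. -/
def L2g {n : ℕ} (u : Sph n → ℂ) (x : Sph n) (r : ℝ) : ℝ :=
  Real.sqrt (∫ y in gball x r, ‖u y‖ ^ 2 ∂ sphMeasure n)

/-- The `L^p(σ)` norm of `u` on `Sⁿ`. -/
def LpS {n : ℕ} (u : Sph n → ℂ) (p : ℝ) : ℝ :=
  (∫ x, ‖u x‖ ^ p ∂ sphMeasure n) ^ (1 / p)

/-- The critical exponent `p_c = 2(n+1)/(n-1)`. -/
def pc (n : ℕ) : ℝ := 2 * ((n : ℝ) + 1) / ((n : ℝ) - 1)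

lemma gamma_interp {x y a b : ℝ} (hx : 0 < x) (hy : 0 < y) (ha : 0 ≤ a) (hb : 0 ≤ b)
    (hab : a + b = 1) : Real.Gamma (a * x + b * y) ≤ Real.Gamma x ^ a * Real.Gamma y ^ b := by
  have h := Real.convexOn_log_Gamma.2 (Set.mem_Ioi.2 hx) (Set.mem_Ioi.2 hy) ha hb hab
  simp only [smul_eq_mul, Function.comp_apply] at h
  have hz : 0 < a * x + b * y := by
    rcases eq_or_lt_of_le ha with h0 | h0
    · have : b = 1 := by linarith
      simp [← h0, this, hy]
    · nlinarith
  have hGz : 0 < Real.Gamma (a * x + b * y) := Real.Gamma_pos_of_pos hz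
  have hGx : 0 < Real.Gamma x := Real.Gamma_pos_of_pos hx
  have hGy : 0 < Real.Gamma y := Real.Gamma_pos_of_pos hy
  calc Real.Gamma (a * x + b * y) = Real.exp (Real.log (Real.Gamma (a * x + b * y))) :=
        (Real.exp_log hGz).symm
    _ ≤ Real.exp (a * Real.log (Real.Gamma x) + b * Real.log (Real.Gamma y)) :=
        Real.exp_le_exp.2 h
    _ = Real.Gamma x ^ a * Real.Gamma y ^ b := by
        rw [Real.exp_add, Real.rpow_def_of_pos hGx, Real.rpow_def_of_pos hGy,
          mul_comm a, mul_comm b]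

lemma gamma_upper {x t : ℝ} (hx : 0 < x) (ht0 : 0 ≤ t) (ht1 : t ≤ 1) :
    Real.Gamma (x + t) ≤ Real.Gamma x * x ^ t := by
  have h := gamma_interp hx (by linarith : (0:ℝ) < x + 1) (by linarith : (0:ℝ) ≤ 1 - t) ht0
    (by ring)
  have hGx : 0 < Real.Gamma x := Real.Gamma_pos_of_pos hx
  have he : (1 - t) * x + t * (x + 1) = x + t := by ring
  rw [he, Real.Gamma_add_one hx.ne'] at h
  calc Real.Gamma (x + t) ≤ Real.Gamma x ^ (1 - t) * (x * Real.Gamma x) ^ t := h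
    _ = Real.Gamma x * x ^ t := by
        rw [Real.mul_rpow hx.le hGx.le, ← mul_assoc, mul_comm (Real.Gamma x ^ (1-t)),
          mul_assoc, ← Real.rpow_add hGx]
        simp [mul_comm]

lemma gamma_lower {x t : ℝ} (hx : 1 ≤ x) (ht0 : 0 ≤ t) (ht1 : t ≤ 1) :
    Real.Gamma x * x ^ t / 2 ≤ Real.Gamma (x + t) := by
  have hx0 : (0:ℝ) < x := by linarith
  have hxt : (0:ℝ) < x + t := by linarith
  have h := gamma_interp hxt (by linarith : (0:ℝ) < x + 1 + t) ht0 (by linarith : (0:ℝ) ≤ 1 - t)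
    (by ring)
  have he : t * (x + t) + (1 - t) * (x + 1 + t) = x + 1 := by ring
  rw [he] at h
  have h2 : x + 1 + t = (x + t) + 1 := by ring
  rw [h2, Real.Gamma_add_one hxt.ne', Real.Gamma_add_one hx0.ne'] at h
  have hGxt : 0 < Real.Gamma (x + t) := Real.Gamma_pos_of_pos hxt
  have hkey : Real.Gamma (x+t) ^ t * ((x+t) * Real.Gamma (x+t)) ^ (1-t)
      = Real.Gamma (x+t) * (x+t) ^ (1-t) := by
    rw [Real.mul_rpow hxt.le hGxt.le, mul_comm ((x+t) ^ (1-t)), ← mul_assoc,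
      ← Real.rpow_add hGxt]
    simp
  rw [hkey] at h
  -- h : x * Gamma x ≤ Gamma (x+t) * (x+t)^(1-t)
  have hb : (x + t) ^ (1 - t) * x ^ t ≤ 2 * x := by
    have h1 : x ^ t ≤ (x + t) ^ t := Real.rpow_le_rpow hx0.le (by linarith) ht0
    have h2 : (x + t) ^ (1 - t) * x ^ t ≤ (x + t) ^ (1 - t) * (x + t) ^ t := by
      apply mul_le_mul_of_nonneg_left h1 (Real.rpow_nonneg hxt.le _)
    have h3 : (x + t) ^ (1 - t) * (x + t) ^ t = x + t := by
      rw [← Real.rpow_add hxt]; simp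
    have h4 : x + t ≤ 2 * x := by linarith
    linarith
  -- conclude
  have hGx : 0 < Real.Gamma x := Real.Gamma_pos_of_pos hx0
  have hpow : 0 < (x + t) ^ (1 - t) := Real.rpow_pos_of_pos hxt _
  rw [div_le_iff₀ (by norm_num : (0:ℝ) < 2)]
  nlinarith [Real.rpow_nonneg hx0.le t, mul_le_mul_of_nonneg_left hb hGxt.le,
    mul_le_mul_of_nonneg_right h (Real.rpow_nonneg hx0.le t)]

lemma gamma_ratio_bounds (N : ℕ) : ∀ {x q : ℝ}, 1 ≤ x → 0 ≤ q → q ≤ N →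
    Real.Gamma x * x ^ q / 2 ≤ Real.Gamma (x + q) ∧
    Real.Gamma (x + q) ≤ (1 + q) ^ q * (x ^ q * Real.Gamma x) := by
  induction N with
  | zero =>
    intro x q hx hq0 hqN
    have : q = 0 := le_antisymm (by exact_mod_cast hqN) hq0
    subst this
    simp only [Real.rpow_zero, add_zero, mul_one, one_mul]
    constructor
    · have : 0 < Real.Gamma x := Real.Gamma_pos_of_pos (by linarith)
      linarith
    · exact le_refl _
  | succ N ih =>
    intro x q hx hq0 hqN
    have hx0 : (0:ℝ) < x := by linarith
    have hGx : 0 < Real.Gamma x := Real.Gamma_pos_of_pos hx0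
    by_cases hq1 : q ≤ 1
    · refine ⟨gamma_lower hx hq0 hq1, ?_⟩
      have h1 : (1:ℝ) ≤ (1 + q) ^ q := Real.one_le_rpow (by linarith) hq0
      have h2 := gamma_upper hx0 hq0 hq1
      have h3 : (1:ℝ) * (x ^ q * Real.Gamma x) ≤ (1 + q) ^ q * (x ^ q * Real.Gamma x) :=
        mul_le_mul_of_nonneg_right h1 (mul_nonneg (Real.rpow_nonneg hx0.le q) hGx.le)
      nlinarith
    · push_neg at hq1
      have hq0' : (0:ℝ) ≤ q - 1 := by linarith
      have hqN' : q - 1 ≤ (N:ℝ) := by push_cast at hqN ⊢; linarith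
      obtain ⟨ihl, ihu⟩ := ih hx hq0' hqN'
      have hxq1 : (0:ℝ) < x + (q - 1) := by linarith
      have hrec : Real.Gamma (x + q) = (x + (q-1)) * Real.Gamma (x + (q-1)) := by
        have : x + q = (x + (q-1)) + 1 := by ring
        rw [this, Real.Gamma_add_one hxq1.ne']
      have hxsplit : x ^ q = x * x ^ (q - 1) := by
        nth_rewrite 1 [show q = 1 + (q-1) by ring]
        rw [Real.rpow_add hx0]; simp
      constructor
      · rw [hrec, hxsplit]
        have h1 : x * (Real.Gamma x * x ^ (q-1) / 2) ≤ (x + (q-1)) * Real.Gamma (x + (q-1)) := by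
          have := mul_le_mul_of_nonneg_left ihl hx0.le
          have h2 : x * (Real.Gamma x * x ^ (q-1) / 2) ≤ x * Real.Gamma (x + (q-1)) := this
          have h3 : x * Real.Gamma (x + (q-1)) ≤ (x + (q-1)) * Real.Gamma (x + (q-1)) := by
            apply mul_le_mul_of_nonneg_right (by linarith) (Real.Gamma_pos_of_pos hxq1).le
          linarith
        calc Real.Gamma x * (x * x ^ (q-1)) / 2 = x * (Real.Gamma x * x ^ (q-1) / 2) := by ring
          _ ≤ (x + (q-1)) * Real.Gamma (x + (q-1)) := h1
      · rw [hrec]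
        have hstep : x + (q - 1) ≤ (1 + q) * x := by nlinarith
        have hmono : (1 + (q-1)) ^ (q-1) ≤ (1 + q) ^ (q-1) :=
          Real.rpow_le_rpow (by linarith) (by linarith) hq0'
        have hGq1 : 0 ≤ Real.Gamma (x + (q-1)) := (Real.Gamma_pos_of_pos hxq1).le
        calc (x + (q-1)) * Real.Gamma (x + (q-1))
            ≤ ((1 + q) * x) * ((1 + (q-1)) ^ (q-1) * (x ^ (q-1) * Real.Gamma x)) := by
              apply mul_le_mul hstep ihu hGq1 (by positivity)
          _ ≤ ((1 + q) * x) * ((1 + q) ^ (q-1) * (x ^ (q-1) * Real.Gamma x)) := by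
              apply mul_le_mul_of_nonneg_left _ (by positivity)
              apply mul_le_mul_of_nonneg_right hmono (by positivity)
          _ = ((1 + q) * (1 + q) ^ (q-1)) * ((x * x ^ (q-1)) * Real.Gamma x) := by ring
          _ = (1 + q) ^ q * (x ^ q * Real.Gamma x) := by
              rw [← hxsplit]
              congr 1
              rw [show (1 + q) * (1 + q) ^ (q-1) = (1 + q) ^ (1:ℝ) * (1 + q) ^ (q-1) by
                rw [Real.rpow_one], ← Real.rpow_add (by linarith : (0:ℝ) < 1 + q)]
              norm_num

lemma gamma_ratio_bounds' {x q : ℝ} (hx : 1 ≤ x) (hq : 0 ≤ q) :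
    Real.Gamma x * x ^ q / 2 ≤ Real.Gamma (x + q) ∧
    Real.Gamma (x + q) ≤ (1 + q) ^ q * (x ^ q * Real.Gamma x) :=
  gamma_ratio_bounds ⌈q⌉₊ hx hq (Nat.le_ceil q)

lemma polar_formula (m : ℕ) [NeZero m] (hm : 2 ≤ m) (s : ℝ) :
    ∫ x : EuclideanSpace ℝ (Fin m), (x 0 ^ 2 + x 1 ^ 2) ^ s * Real.exp (-‖x‖ ^ 2)
    = (∫ ω : Metric.sphere (0 : EuclideanSpace ℝ (Fin m)) 1,
        ((ω : EuclideanSpace ℝ (Fin m)) 0 ^ 2 + (ω : EuclideanSpace ℝ (Fin m)) 1 ^ 2) ^ s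
        ∂ (volume : Measure (EuclideanSpace ℝ (Fin m))).toSphere)
      * ∫ r in Set.Ioi (0:ℝ), r ^ (2 * s + ((m:ℝ) - 1)) * Real.exp (-r ^ 2) := by
  set E := EuclideanSpace ℝ (Fin m) with hE
  haveI : Nontrivial E := by unfold E; infer_instance
  set g : E → ℝ := fun x => (x 0 ^ 2 + x 1 ^ 2) ^ s * Real.exp (-‖x‖ ^ 2) with hg
  set φ : Metric.sphere (0 : E) 1 → ℝ :=
    fun ω => ((ω : E) 0 ^ 2 + (ω : E) 1 ^ 2) ^ s with hφ
  set ψ0 : ℝ → ℝ := fun r => r ^ (2 * s) * Real.exp (-r ^ 2) with hψ0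
  have hdim : Module.finrank ℝ E = m := finrank_euclideanSpace_fin
  have hmp := (volume : Measure E).measurePreserving_homeomorphUnitSphereProd
  have hcomp := hmp.integral_comp (Homeomorph.measurableEmbedding _)
    (fun z : Metric.sphere (0:E) 1 × Set.Ioi (0:ℝ) => g ((z.2 : ℝ) • (z.1 : E)))
  have step1 : ∫ x : E, g x = ∫ x : ({(0:E)}ᶜ : Set E), g x ∂((volume : Measure E).comap (↑)) := by
    rw [integral_subtype_comap (measurableSet_singleton (0:E)).compl, restrict_compl_singleton]
  have step2 : ∫ x : ({(0:E)}ᶜ : Set E), g x ∂((volume : Measure E).comap (↑))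
      = ∫ z : Metric.sphere (0:E) 1 × Set.Ioi (0:ℝ), g ((z.2 : ℝ) • (z.1 : E))
        ∂((volume : Measure E).toSphere.prod (Measure.volumeIoiPow (Module.finrank ℝ E - 1))) := by
    refine Eq.trans ?_ hcomp
    apply integral_congr_ae
    filter_upwards with x
    have hx : (x : E) ≠ 0 := x.2
    simp only [homeomorphUnitSphereProd_apply_fst_coe, homeomorphUnitSphereProd_apply_snd_coe]
    rw [smul_inv_smul₀ (norm_ne_zero_iff.2 hx)]
  have step3 : ∀ z : Metric.sphere (0:E) 1 × Set.Ioi (0:ℝ),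
      g ((z.2 : ℝ) • (z.1 : E)) = φ z.1 * ψ0 (z.2 : ℝ) := by
    rintro ⟨⟨ω, hω⟩, ⟨r, hr⟩⟩
    have hr0 : (0:ℝ) < r := hr
    have hω1 : ‖ω‖ = 1 := by rwa [Metric.mem_sphere, dist_zero_right] at hω
    simp only [hg, hφ, hψ0]
    have hsmul : ∀ i, (r • ω : E) i = r * ω i := fun i => rfl
    rw [hsmul, hsmul]
    have hnorm : ‖(r • ω : E)‖ = r := by
      rw [norm_smul, hω1, Real.norm_eq_abs, abs_of_pos hr0, mul_one]
    rw [hnorm]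
    have hbase : (r * ω 0) ^ 2 + (r * ω 1) ^ 2 = r ^ 2 * (ω 0 ^ 2 + ω 1 ^ 2) := by ring
    rw [hbase, Real.mul_rpow (sq_nonneg r) (by positivity)]
    have : (r ^ 2 : ℝ) ^ s = r ^ (2 * s) := by
      rw [← Real.rpow_natCast r 2, ← Real.rpow_mul hr0.le]
      norm_num
    rw [this]; ring
  have step4 : ∫ z : Metric.sphere (0:E) 1 × Set.Ioi (0:ℝ), g ((z.2 : ℝ) • (z.1 : E))
      ∂((volume : Measure E).toSphere.prod (Measure.volumeIoiPow (Module.finrank ℝ E - 1)))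
      = (∫ ω, φ ω ∂(volume : Measure E).toSphere)
        * ∫ r', ψ0 (r' : ℝ) ∂(Measure.volumeIoiPow (Module.finrank ℝ E - 1)) := by
    rw [show (fun z : Metric.sphere (0:E) 1 × Set.Ioi (0:ℝ) => g ((z.2 : ℝ) • (z.1 : E)))
      = fun z => φ z.1 * ψ0 (z.2 : ℝ) from funext step3]
    exact integral_prod_mul (μ := (volume : Measure E).toSphere) (ν := Measure.volumeIoiPow (Module.finrank ℝ E - 1)) φ (fun r' => ψ0 (r' : ℝ))
  have step5 : ∫ r', ψ0 ((r' : Set.Ioi (0:ℝ)) : ℝ) ∂(Measure.volumeIoiPow (Module.finrank ℝ E - 1))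
      = ∫ r in Set.Ioi (0:ℝ), r ^ (2 * s + ((m:ℝ) - 1)) * Real.exp (-r ^ 2) := by
    simp only [Measure.volumeIoiPow, ENNReal.ofReal]
    rw [integral_withDensity_eq_integral_smul
      ((measurable_subtype_coe.pow_const _).real_toNNReal)]
    rw [integral_subtype_comap measurableSet_Ioi
      (fun a => Real.toNNReal (a ^ (Module.finrank ℝ E - 1)) • ψ0 a)]
    refine setIntegral_congr_fun measurableSet_Ioi fun r hr => ?_
    have hr0 : (0:ℝ) < r := hr
    rw [NNReal.smul_def, Real.coe_toNNReal _ (pow_nonneg hr0.le _)]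
    simp only [hψ0, smul_eq_mul, hdim]
    rw [Real.rpow_add hr0, ← Real.rpow_natCast r (m-1)]
    have : ((m - 1 : ℕ) : ℝ) = (m:ℝ) - 1 := by
      have : 1 ≤ m := by omega
      push_cast [Nat.cast_sub this]
      ring
    rw [this]; ring
  rw [step1, step2, step4, step5]

lemma radial_integral {q : ℝ} (hq : -1 < q) :
    ∫ r in Set.Ioi (0:ℝ), r ^ q * Real.exp (-r ^ 2) = Real.Gamma ((q + 1) / 2) / 2 := by
  have h2 : (2:ℝ) ≠ 0 := two_ne_zero
  have key := integral_comp_rpow_Ioi (fun y => Real.exp (-y) * y ^ ((q - 1) / 2)) h2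
  rw [Real.Gamma_eq_integral (by linarith : (0:ℝ) < (q + 1) / 2)]
  have hexp : (q + 1) / 2 - 1 = (q - 1) / 2 := by ring
  rw [hexp, ← key, eq_div_iff h2, ← integral_mul_const]
  refine setIntegral_congr_fun measurableSet_Ioi fun r hr => ?_
  have hr0 : (0:ℝ) < r := hr
  have hrpow2 : r ^ (2:ℝ) = r ^ (2:ℕ) := by
    rw [← Real.rpow_natCast r 2]; norm_num
  have h1 : (r ^ (2:ℝ)) ^ ((q - 1) / 2) = r ^ (q - 1) := by
    rw [← Real.rpow_mul hr0.le, show (2:ℝ) * ((q - 1) / 2) = q - 1 by ring]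
  have h21 : r ^ ((2:ℝ) - 1) = r := by norm_num
  have hq' : r ^ q = r * r ^ (q - 1) := by
    have h := Real.rpow_add hr0 1 (q - 1)
    rw [Real.rpow_one, show (1:ℝ) + (q - 1) = q by ring] at h
    exact h
  simp only [smul_eq_mul, h21, abs_two]
  rw [h1, hrpow2, hq']
  ring

lemma norm_sq_eq_sum (m : ℕ) (x : EuclideanSpace ℝ (Fin m)) : ‖x‖ ^ 2 = ∑ i, x i ^ 2 := by
  rw [EuclideanSpace.norm_eq, Real.sq_sqrt (by positivity)]
  simp [sq_abs]

lemma gaussian_factorization (n : ℕ) (hn : 2 ≤ n) (s : ℝ) :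
    ∫ x : EuclideanSpace ℝ (Fin (n+1)), (x 0 ^ 2 + x 1 ^ 2) ^ s * Real.exp (-‖x‖ ^ 2)
    = (∫ y : EuclideanSpace ℝ (Fin 2), (y 0 ^ 2 + y 1 ^ 2) ^ s * Real.exp (-‖y‖ ^ 2))
      * (Real.sqrt π) ^ (n - 1) := by
  set e : Fin 2 ⊕ Fin (n-1) ≃ Fin (n+1) := finSumFinEquiv.trans (finCongr (by omega)) with hedef
  have he0 : e (Sum.inl 0) = 0 := by ext; simp [e]
  have he1 : e (Sum.inl 1) = 1 := by ext; simp [e]; rw [Nat.mod_eq_of_lt (by omega)]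
  -- step 1 : to pi space
  have h1 : ∫ x : EuclideanSpace ℝ (Fin (n+1)), (x 0 ^ 2 + x 1 ^ 2) ^ s * Real.exp (-‖x‖ ^ 2)
      = ∫ y : Fin (n+1) → ℝ, (y 0 ^ 2 + y 1 ^ 2) ^ s * Real.exp (-∑ i, y i ^ 2) := by
    rw [← MeasurePreserving.integral_comp'
      (EuclideanSpace.volume_preserving_symm_measurableEquiv_toLp (Fin (n+1)))
      (fun y : Fin (n+1) → ℝ => (y 0 ^ 2 + y 1 ^ 2) ^ s * Real.exp (-∑ i, y i ^ 2))]
    apply integral_congr_ae; filter_upwards with x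
    rw [norm_sq_eq_sum]
    rfl
  -- step 2 : split coordinates
  set T : ((Fin 2 → ℝ) × (Fin (n-1) → ℝ)) ≃ᵐ (Fin (n+1) → ℝ) :=
    (MeasurableEquiv.sumPiEquivProdPi (fun _ : Fin 2 ⊕ Fin (n-1) => ℝ)).symm.trans
      (MeasurableEquiv.piCongrLeft (fun _ : Fin (n+1) => ℝ) e) with hTdef
  have hT : MeasurePreserving T (volume : Measure ((Fin 2 → ℝ) × (Fin (n-1) → ℝ)))
      (volume : Measure (Fin (n+1) → ℝ)) := by
    exact (volume_measurePreserving_piCongrLeft (fun _ : Fin (n+1) => ℝ) e).comp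
      (volume_measurePreserving_sumPiEquivProdPi_symm (fun _ : Fin 2 ⊕ Fin (n-1) => ℝ))
  have hTapp : ∀ (p : (Fin 2 → ℝ) × (Fin (n-1) → ℝ)) (j : Fin 2 ⊕ Fin (n-1)),
      T p (e j) = Sum.elim p.1 p.2 j := by
    rintro p (j | j) <;>
    · show Equiv.piCongrLeft (fun _ : Fin (n+1) => ℝ) e
        ((Equiv.sumPiEquivProdPi (fun _ : Fin 2 ⊕ Fin (n-1) => ℝ)).symm p) (e _) = _
      rw [Equiv.piCongrLeft_apply_apply]
      rfl
  have h2 : ∫ y : Fin (n+1) → ℝ, (y 0 ^ 2 + y 1 ^ 2) ^ s * Real.exp (-∑ i, y i ^ 2)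
      = ∫ p : (Fin 2 → ℝ) × (Fin (n-1) → ℝ),
          ((p.1 0 ^ 2 + p.1 1 ^ 2) ^ s * Real.exp (-(p.1 0 ^ 2 + p.1 1 ^ 2)))
          * Real.exp (-∑ i, p.2 i ^ 2) := by
    rw [← MeasurePreserving.integral_comp' hT
      (fun y : Fin (n+1) → ℝ => (y 0 ^ 2 + y 1 ^ 2) ^ s * Real.exp (-∑ i, y i ^ 2))]
    apply integral_congr_ae; filter_upwards with p
    have hsum : ∑ i, (T p) i ^ 2
        = (∑ i : Fin 2, p.1 i ^ 2) + ∑ i : Fin (n-1), p.2 i ^ 2 := by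
      rw [← Equiv.sum_comp e (fun i => (T p) i ^ 2)]
      rw [Fintype.sum_sum_type]
      congr 1 <;> { apply Finset.sum_congr rfl; intro j _; rw [hTapp]; rfl }
    have h0 : T p 0 = p.1 0 := by rw [← he0, hTapp]; rfl
    have h1' : T p 1 = p.1 1 := by rw [← he1, hTapp]; rfl
    rw [h0, h1', hsum, Fin.sum_univ_two]
    rw [neg_add, Real.exp_add]
    ring
  -- step 3 : product integral
  have h3 : ∫ p : (Fin 2 → ℝ) × (Fin (n-1) → ℝ),
        ((p.1 0 ^ 2 + p.1 1 ^ 2) ^ s * Real.exp (-(p.1 0 ^ 2 + p.1 1 ^ 2)))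
        * Real.exp (-∑ i, p.2 i ^ 2)
      = (∫ y : Fin 2 → ℝ, (y 0 ^ 2 + y 1 ^ 2) ^ s * Real.exp (-(y 0 ^ 2 + y 1 ^ 2)))
        * ∫ z : Fin (n-1) → ℝ, Real.exp (-∑ i, z i ^ 2) := by
    exact integral_prod_mul (μ := (volume : Measure (Fin 2 → ℝ)))
      (ν := (volume : Measure (Fin (n-1) → ℝ)))
      (fun y => (y 0 ^ 2 + y 1 ^ 2) ^ s * Real.exp (-(y 0 ^ 2 + y 1 ^ 2)))
      (fun z => Real.exp (-∑ i, z i ^ 2))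
  -- step 4 : gaussian value
  have h4 : ∫ z : Fin (n-1) → ℝ, Real.exp (-∑ i, z i ^ 2) = (Real.sqrt π) ^ (n - 1) := by
    have : ∀ z : Fin (n-1) → ℝ, Real.exp (-∑ i, z i ^ 2) = ∏ i, Real.exp (-z i ^ 2) := by
      intro z
      rw [← Real.exp_sum]
      congr 1
      rw [← Finset.sum_neg_distrib]
    simp_rw [this]
    rw [volume_pi, MeasureTheory.integral_fintype_prod_eq_pow (ι := Fin (n-1)) (fun t : ℝ => Real.exp (-t ^ 2))]
    congr 1
    · have := integral_gaussian 1
      simp only [one_mul, div_one] at this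
      rw [← this]
      · simp [Fintype.card_fin]
    · simp
  -- step 5 : back to Euclidean space for Fin 2
  have h5 : ∫ y : Fin 2 → ℝ, (y 0 ^ 2 + y 1 ^ 2) ^ s * Real.exp (-(y 0 ^ 2 + y 1 ^ 2))
      = ∫ y : EuclideanSpace ℝ (Fin 2), (y 0 ^ 2 + y 1 ^ 2) ^ s * Real.exp (-‖y‖ ^ 2) := by
    rw [← MeasurePreserving.integral_comp'
      (EuclideanSpace.volume_preserving_symm_measurableEquiv_toLp (Fin 2))
      (fun y : Fin 2 → ℝ => (y 0 ^ 2 + y 1 ^ 2) ^ s * Real.exp (-(y 0 ^ 2 + y 1 ^ 2)))]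
    apply integral_congr_ae; filter_upwards with y
    rw [norm_sq_eq_sum, Fin.sum_univ_two]
    rfl
  rw [h1, h2, h3, h4, h5]

lemma J_formula (n : ℕ) (hn : 2 ≤ n) :
    ∃ D : ℝ, 0 < D ∧ ∀ s : ℝ, 0 ≤ s →
      (∫ x : Sph n, (((x : Esp n) 0) ^ 2 + ((x : Esp n) 1) ^ 2) ^ s ∂ sphMeasure n)
      = D * (Real.Gamma (s + 1) / Real.Gamma (s + 1 + ((n:ℝ) - 1) / 2)) := by
  classical
  set c2 : ℝ :=
    ((volume : Measure (EuclideanSpace ℝ (Fin 2))).toSphere Set.univ).toReal with hc2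
  have hc2pos : 0 < c2 := by
    rw [hc2]
    apply ENNReal.toReal_pos
    · rw [Measure.toSphere_apply_univ]
      have h1 : (volume : Measure (EuclideanSpace ℝ (Fin 2))) (Metric.ball 0 1) ≠ 0 :=
        (Metric.measure_ball_pos _ _ one_pos).ne'
      simp only [ne_eq, mul_eq_zero, not_or]
      exact ⟨by simp [finrank_euclideanSpace_fin], h1⟩
    · rw [Measure.toSphere_apply_univ]
      exact ENNReal.mul_ne_top (by simp) (measure_ball_lt_top).ne
  refine ⟨c2 * (Real.sqrt π) ^ (n - 1), by positivity, fun s hs => ?_⟩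
  -- sphere in dim 2 : integrand is 1
  have hsph2 : ∀ ω : Metric.sphere (0 : EuclideanSpace ℝ (Fin 2)) 1,
      ((ω : EuclideanSpace ℝ (Fin 2)) 0 ^ 2 + (ω : EuclideanSpace ℝ (Fin 2)) 1 ^ 2) = 1 := by
    rintro ⟨ω, hω⟩
    have hω1 : ‖ω‖ = 1 := by rwa [Metric.mem_sphere, dist_zero_right] at hω
    have := norm_sq_eq_sum 2 ω
    rw [hω1, Fin.sum_univ_two] at this
    simpa using this.symm
  have hA : ∫ y : EuclideanSpace ℝ (Fin 2), (y 0 ^ 2 + y 1 ^ 2) ^ s * Real.exp (-‖y‖ ^ 2)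
      = c2 * (Real.Gamma (s + 1) / 2) := by
    rw [polar_formula 2 (le_refl 2) s, radial_integral (q := 2 * s + (((2:ℕ):ℝ) - 1)) (by push_cast; linarith)]
    have h1 : (∫ ω : Metric.sphere (0 : EuclideanSpace ℝ (Fin 2)) 1,
        ((ω : EuclideanSpace ℝ (Fin 2)) 0 ^ 2 + (ω : EuclideanSpace ℝ (Fin 2)) 1 ^ 2) ^ s
        ∂ (volume : Measure (EuclideanSpace ℝ (Fin 2))).toSphere) = c2 := by
      rw [show (fun ω : Metric.sphere (0 : EuclideanSpace ℝ (Fin 2)) 1 =>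
          ((ω : EuclideanSpace ℝ (Fin 2)) 0 ^ 2 + (ω : EuclideanSpace ℝ (Fin 2)) 1 ^ 2) ^ s)
        = fun _ => (1:ℝ) from funext fun ω => by rw [hsph2 ω, Real.one_rpow]]
      rw [integral_const, smul_eq_mul, mul_one, hc2]; rfl
    rw [h1]
    congr 2
    push_cast
    ring
  have hmain := polar_formula (n+1) (by omega) s
  rw [radial_integral (q := 2 * s + ((((n+1):ℕ):ℝ) - 1)) (by push_cast; linarith)] at hmain
  rw [gaussian_factorization n hn s, hA] at hmain
  -- hmain : c2 * (Γ(s+1)/2) * √π^(n-1) = J * (Γ((2s+(n+1-1)+1)/2)/2)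
  have hGpos : 0 < Real.Gamma ((2 * s + ((((n+1):ℕ):ℝ) - 1) + 1) / 2) := by
    apply Real.Gamma_pos_of_pos
    have hncast : (0:ℝ) ≤ (n:ℝ) := Nat.cast_nonneg n
    push_cast; linarith
  have hexp : (2 * s + ((((n+1):ℕ):ℝ) - 1) + 1) / 2 = s + 1 + ((n:ℝ) - 1) / 2 := by
    push_cast; ring
  rw [hexp] at hGpos hmain
  have hmain' : c2 * (Real.Gamma (s+1) / 2) * (Real.sqrt π) ^ (n-1)
      = (∫ x : Sph n, (((x : Esp n) 0) ^ 2 + ((x : Esp n) 1) ^ 2) ^ s ∂ sphMeasure n)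
        * (Real.Gamma (s + 1 + ((n:ℝ) - 1) / 2) / 2) := hmain
  rw [← mul_div_assoc, eq_div_iff hGpos.ne']
  linear_combination (-2) * hmain'

lemma rpow_neg_le_rpow_neg {x y e : ℝ} (hx : 0 < x) (hxy : x ≤ y) (he : 0 ≤ e) :
    y ^ (-e) ≤ x ^ (-e) := by
  rw [Real.rpow_neg (by linarith), Real.rpow_neg hx.le]
  exact inv_anti₀ (Real.rpow_pos_of_pos hx e) (Real.rpow_le_rpow hx.le hxy he)

/-- `‖Q_k‖_{L^p(σ)} / ‖Q_k‖_{L²(σ)} ≈ k^{((n-1)/2)(1/2 - 1/p)}` for the highest weight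
spherical harmonic `Q_k = (x₁ + i x₂)^k`, for all `2 ≤ p < ∞` (Sections 3-4 of the paper). -/
theorem highest_weight_Lp_norm_ratio_asymptotics (n : ℕ) (hn : 2 ≤ n) (p : ℝ) (hp : 2 ≤ p) :
    ∃ c C : ℝ, 0 < c ∧ 0 < C ∧ ∀ k : ℕ, 1 ≤ k →
      c * (k : ℝ) ^ (((n : ℝ) - 1) / 2 * (1 / 2 - 1 / p)) ≤
        (∫ x : Sph n, (((x : Esp n) 0) ^ 2 + ((x : Esp n) 1) ^ 2) ^ (p * (k : ℝ) / 2)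
            ∂ sphMeasure n) ^ (1 / p) /
          (∫ x : Sph n, (((x : Esp n) 0) ^ 2 + ((x : Esp n) 1) ^ 2) ^ k
            ∂ sphMeasure n) ^ ((1 : ℝ) / 2) ∧
      (∫ x : Sph n, (((x : Esp n) 0) ^ 2 + ((x : Esp n) 1) ^ 2) ^ (p * (k : ℝ) / 2)
            ∂ sphMeasure n) ^ (1 / p) /
          (∫ x : Sph n, (((x : Esp n) 0) ^ 2 + ((x : Esp n) 1) ^ 2) ^ k
            ∂ sphMeasure n) ^ ((1 : ℝ) / 2) ≤
        C * (k : ℝ) ^ (((n : ℝ) - 1) / 2 * (1 / 2 - 1 / p)) := by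
  obtain ⟨D, hD, hJ⟩ := J_formula n hn
  have hn' : (2:ℝ) ≤ (n:ℝ) := by exact_mod_cast hn
  set q : ℝ := ((n:ℝ) - 1) / 2 with hqdef
  have hq0 : 0 ≤ q := by rw [hqdef]; linarith
  have hp0 : 0 < p := by linarith
  set c1 : ℝ := D / (1 + q) ^ q with hc1def
  set C1 : ℝ := 2 * D with hC1def
  have h1q : (0:ℝ) < (1 + q) ^ q := Real.rpow_pos_of_pos (by linarith) q
  have hc1pos : 0 < c1 := div_pos hD h1q
  have hC1pos : 0 < C1 := by rw [hC1def]; linarith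
  -- two sided bounds for the J integral
  have hJb : ∀ s : ℝ, 0 ≤ s →
      c1 * (s+1) ^ (-q) ≤
        (∫ x : Sph n, (((x : Esp n) 0) ^ 2 + ((x : Esp n) 1) ^ 2) ^ s ∂ sphMeasure n) ∧
      (∫ x : Sph n, (((x : Esp n) 0) ^ 2 + ((x : Esp n) 1) ^ 2) ^ s ∂ sphMeasure n) ≤
        C1 * (s+1) ^ (-q) := by
    intro s hs
    have hx1 : (1:ℝ) ≤ s + 1 := by linarith
    obtain ⟨hlow, hupp⟩ := gamma_ratio_bounds' hx1 hq0
    have hG1 : 0 < Real.Gamma (s+1) := Real.Gamma_pos_of_pos (by linarith)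
    have hGd : 0 < Real.Gamma (s+1+q) := Real.Gamma_pos_of_pos (by linarith)
    have hsp : (0:ℝ) < s + 1 := by linarith
    have hP : 0 < (s+1) ^ q := Real.rpow_pos_of_pos hsp q
    have hPn : 0 < (s+1) ^ (-q) := Real.rpow_pos_of_pos hsp _
    have hPP : (s+1) ^ (-q) * (s+1) ^ q = 1 := by
      rw [← Real.rpow_add hsp, neg_add_cancel, Real.rpow_zero]
    have hc1q : c1 * (1 + q) ^ q = D := div_mul_cancel₀ D h1q.ne'
    rw [hJ s hs]
    constructor
    · rw [← mul_div_assoc, le_div_iff₀ hGd]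
      calc c1 * (s+1) ^ (-q) * Real.Gamma (s+1+q)
          ≤ c1 * (s+1) ^ (-q) * ((1 + q) ^ q * ((s+1) ^ q * Real.Gamma (s+1))) := by
            apply mul_le_mul_of_nonneg_left hupp (by positivity)
        _ = (c1 * (1 + q) ^ q) * (((s+1) ^ (-q) * (s+1) ^ q) * Real.Gamma (s+1)) := by ring
        _ = D * Real.Gamma (s+1) := by rw [hPP, hc1q]; ring
    · rw [← mul_div_assoc, div_le_iff₀ hGd]
      calc D * Real.Gamma (s+1)
          = C1 * (s+1) ^ (-q) * (Real.Gamma (s+1) * (s+1) ^ q / 2) := by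
            rw [hC1def]
            field_simp
            linear_combination hPP.symm
        _ ≤ C1 * (s+1) ^ (-q) * Real.Gamma (s+1+q) := by
            apply mul_le_mul_of_nonneg_left hlow (by positivity)
  -- final assembly
  set β : ℝ := q * (1 / p) with hβdef
  set γ : ℝ := q * (1 / 2) with hγdef
  have hβ0 : 0 ≤ β := by rw [hβdef]; positivity
  have hγ0 : 0 ≤ γ := by rw [hγdef]; positivity
  have hp21 : (0:ℝ) < p / 2 + 1 := by linarith
  refine ⟨(c1 ^ (1/p) / C1 ^ ((1:ℝ)/2)) * (p/2+1) ^ (-β),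
          (C1 ^ (1/p) / c1 ^ ((1:ℝ)/2)) * 2 ^ γ, by positivity, by positivity, ?_⟩
  intro k hk
  have hk1 : (1:ℝ) ≤ (k:ℝ) := by exact_mod_cast hk
  have hk0 : (0:ℝ) < (k:ℝ) := by linarith
  set a : ℝ := p * (k:ℝ) / 2 with hadef
  have ha0 : 0 ≤ a := by rw [hadef]; positivity
  obtain ⟨hAl, hAu⟩ := hJb a ha0
  obtain ⟨hBl, hBu⟩ := hJb (k:ℝ) (by positivity)
  have hnat : (∫ x : Sph n, (((x : Esp n) 0) ^ 2 + ((x : Esp n) 1) ^ 2) ^ k ∂ sphMeasure n)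
      = (∫ x : Sph n, (((x : Esp n) 0) ^ 2 + ((x : Esp n) 1) ^ 2) ^ ((k:ℕ):ℝ) ∂ sphMeasure n) := by
    apply integral_congr_ae; filter_upwards with x
    rw [Real.rpow_natCast]
  rw [hnat]
  set Ia := ∫ x : Sph n, (((x : Esp n) 0) ^ 2 + ((x : Esp n) 1) ^ 2) ^ a ∂ sphMeasure n with hIa
  set Ib := ∫ x : Sph n, (((x : Esp n) 0) ^ 2 + ((x : Esp n) 1) ^ 2) ^ ((k:ℕ):ℝ) ∂ sphMeasure n
    with hIb
  have hap1 : (0:ℝ) < a + 1 := by linarith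
  have hkp1 : (0:ℝ) < (k:ℝ) + 1 := by linarith
  have hIapos : 0 < Ia := lt_of_lt_of_le (by positivity) hAl
  have hIbpos : 0 < Ib := lt_of_lt_of_le (by positivity) hBl
  have h1p0 : (0:ℝ) ≤ 1/p := by positivity
  have h120 : (0:ℝ) ≤ (1:ℝ)/2 := by norm_num
  -- numerator and denominator bounds
  have hNumU : Ia ^ (1/p) ≤ (C1 * (a+1) ^ (-q)) ^ (1/p) :=
    Real.rpow_le_rpow hIapos.le hAu h1p0
  have hNumL : (c1 * (a+1) ^ (-q)) ^ (1/p) ≤ Ia ^ (1/p) :=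
    Real.rpow_le_rpow (by positivity) hAl h1p0
  have hDenU : Ib ^ ((1:ℝ)/2) ≤ (C1 * ((k:ℝ)+1) ^ (-q)) ^ ((1:ℝ)/2) :=
    Real.rpow_le_rpow hIbpos.le hBu h120
  have hDenL : (c1 * ((k:ℝ)+1) ^ (-q)) ^ ((1:ℝ)/2) ≤ Ib ^ ((1:ℝ)/2) :=
    Real.rpow_le_rpow (by positivity) hBl h120
  have hRatioU : Ia ^ (1/p) / Ib ^ ((1:ℝ)/2)
      ≤ (C1 * (a+1) ^ (-q)) ^ (1/p) / (c1 * ((k:ℝ)+1) ^ (-q)) ^ ((1:ℝ)/2) :=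
    div_le_div₀ (by positivity) hNumU (by positivity) hDenL
  have hRatioL : (c1 * (a+1) ^ (-q)) ^ (1/p) / (C1 * ((k:ℝ)+1) ^ (-q)) ^ ((1:ℝ)/2)
      ≤ Ia ^ (1/p) / Ib ^ ((1:ℝ)/2) :=
    div_le_div₀ (by positivity) hNumL (Real.rpow_pos_of_pos hIbpos _) hDenU
  -- expansion identities
  have hsplitA : ∀ X : ℝ, 0 < X → (X * (a+1) ^ (-q)) ^ (1/p) = X ^ (1/p) * (a+1) ^ (-β) := by
    intro X hX
    rw [Real.mul_rpow hX.le (Real.rpow_nonneg hap1.le _), ← Real.rpow_mul hap1.le]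
    congr 1
    rw [hβdef]; ring
  have hsplitB : ∀ X : ℝ, 0 < X → (X * ((k:ℝ)+1) ^ (-q)) ^ ((1:ℝ)/2)
      = X ^ ((1:ℝ)/2) * ((k:ℝ)+1) ^ (-γ) := by
    intro X hX
    rw [Real.mul_rpow hX.le (Real.rpow_nonneg hkp1.le _), ← Real.rpow_mul hkp1.le]
    congr 1
    rw [hγdef]; ring
  have hdivexp : ∀ X Y : ℝ, 0 < X → 0 < Y →
      (X * (a+1) ^ (-β)) / (Y * ((k:ℝ)+1) ^ (-γ))
      = (X / Y) * ((a+1) ^ (-β) * ((k:ℝ)+1) ^ γ) := by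
    intro X Y hX hY
    rw [Real.rpow_neg hkp1.le γ]
    have h1 : ((k:ℝ)+1) ^ γ ≠ 0 := (Real.rpow_pos_of_pos hkp1 γ).ne'
    field_simp
  -- monotonicity in k
  have hu1 : (a+1) ^ (-β) ≤ (k:ℝ) ^ (-β) := by
    apply rpow_neg_le_rpow_neg hk0 _ hβ0
    have hpk : 2 * (k:ℝ) ≤ p * (k:ℝ) := mul_le_mul_of_nonneg_right hp hk0.le
    rw [hadef]; linarith
  have hu2 : ((k:ℝ)+1) ^ γ ≤ 2 ^ γ * (k:ℝ) ^ γ := by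
    rw [← Real.mul_rpow (by norm_num) hk0.le]
    exact Real.rpow_le_rpow (by linarith) (by linarith) hγ0
  have hl1 : (p/2+1) ^ (-β) * (k:ℝ) ^ (-β) ≤ (a+1) ^ (-β) := by
    rw [← Real.mul_rpow hp21.le hk0.le]
    apply rpow_neg_le_rpow_neg hap1 _ hβ0
    rw [hadef]
    have : (p/2+1) * (k:ℝ) = p * (k:ℝ) / 2 + (k:ℝ) := by ring
    linarith
  have hl2 : (k:ℝ) ^ γ ≤ ((k:ℝ)+1) ^ γ :=
    Real.rpow_le_rpow hk0.le (by linarith) hγ0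
  have hkE : (k:ℝ) ^ (-β) * (k:ℝ) ^ γ = (k:ℝ) ^ (q * (1/2 - 1/p)) := by
    rw [← Real.rpow_add hk0]
    congr 1
    rw [hβdef, hγdef]; ring
  have hposkb : 0 < (k:ℝ) ^ (-β) := Real.rpow_pos_of_pos hk0 _
  have hposkg : 0 < (k:ℝ) ^ γ := Real.rpow_pos_of_pos hk0 _
  constructor
  · -- lower bound
    refine le_trans ?_ hRatioL
    rw [hsplitA c1 hc1pos, hsplitB C1 hC1pos, hdivexp _ _ (Real.rpow_pos_of_pos hc1pos _)
      (Real.rpow_pos_of_pos hC1pos _)]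
    have hmono : ((p/2+1) ^ (-β) * (k:ℝ) ^ (-β)) * (k:ℝ) ^ γ
        ≤ (a+1) ^ (-β) * ((k:ℝ)+1) ^ γ := by
      apply mul_le_mul hl1 hl2 hposkg.le (Real.rpow_nonneg hap1.le _)
    have heq : (c1 ^ (1/p) / C1 ^ ((1:ℝ)/2)) * (p/2+1) ^ (-β) * ((k:ℝ) ^ (q * (1/2 - 1/p)))
        = (c1 ^ (1/p) / C1 ^ ((1:ℝ)/2)) * (((p/2+1) ^ (-β) * (k:ℝ) ^ (-β)) * (k:ℝ) ^ γ) := by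
      rw [← hkE]; ring
    rw [heq]
    apply mul_le_mul_of_nonneg_left hmono (by positivity)
  · -- upper bound
    refine le_trans hRatioU ?_
    rw [hsplitA C1 hC1pos, hsplitB c1 hc1pos, hdivexp _ _ (Real.rpow_pos_of_pos hC1pos _)
      (Real.rpow_pos_of_pos hc1pos _)]
    have hmono : (a+1) ^ (-β) * ((k:ℝ)+1) ^ γ
        ≤ (k:ℝ) ^ (-β) * (2 ^ γ * (k:ℝ) ^ γ) := by
      apply mul_le_mul hu1 hu2 (Real.rpow_nonneg hkp1.le _) hposkb.le
    have heq : (C1 ^ (1/p) / c1 ^ ((1:ℝ)/2)) * 2 ^ γ * ((k:ℝ) ^ (q * (1/2 - 1/p)))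
        = (C1 ^ (1/p) / c1 ^ ((1:ℝ)/2)) * ((k:ℝ) ^ (-β) * (2 ^ γ * (k:ℝ) ^ γ)) := by
      rw [← hkE]; ring
    rw [heq]
    apply mul_le_mul_of_nonneg_left hmono (by positivity)
end
end

section
/- For every n ≥ 2 there exist constants c, C > 0, depending only on n, such that for every integer k ≥ 1 the L²(σ)-normalized highest weight spherical harmonic Q̃_k = Q_k / ‖Q_k‖_{L²(σ)} satisfies: (i) |Q̃_k(x)| ≤ C k^{(n−1)/4} e^{−k t(x)/2} for every x ∈ Sⁿ, where t(x) = x₃² + ⋯ + x_{n+1}²; and (ii) |Q̃_k(x)| ≥ c k^{(n−1)/4} e^{−k t(x)} for every x ∈ Sⁿ with t(x) ≤ 1/2. -/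
open MeasureTheory Real

noncomputable section

/-- The highest weight spherical harmonic `Q_k(x) = (x₁ + i x₂)^k` on `Sⁿ`. -/
def Qfun (n k : ℕ) (x : Sph n) : ℂ :=
  ((((x : Esp n) 0 : ℝ) : ℂ) + Complex.I * (((x : Esp n) 1 : ℝ) : ℂ)) ^ k

/-- The `L²(σ)` norm of `Q_k`. -/
def Qnorm (n k : ℕ) : ℝ :=
  Real.sqrt (∫ x : Sph n, ‖Qfun n k x‖ ^ 2 ∂ sphMeasure n)

/-- The `L²(σ)`-normalized highest weight spherical harmonic `Q̃_k = Q_k / ‖Q_k‖_{L²(σ)}`. -/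
def Qtilde (n k : ℕ) (x : Sph n) : ℂ := Qfun n k x / (Qnorm n k : ℂ)

/-- `t(x) = x₃² + ⋯ + x_{n+1}²`, the squared distance from the equatorial plane. -/
def tfun (n : ℕ) (x : Sph n) : ℝ :=
  ∑ i ∈ Finset.univ.filter (fun i : Fin (n + 1) => i ≠ 0 ∧ i ≠ 1), ((x : Esp n) i) ^ 2


section GaussAux
open Set Metric

lemma Gamma_add_half_le {x : ℝ} (hx : 0 < x) :
    Real.Gamma (x + 1/2) ≤ Real.Gamma x * Real.sqrt x := by
  have hA := Real.Gamma_pos_of_pos hx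
  have hx1 : (0:ℝ) < x + 1 := by linarith
  have hB := Real.Gamma_pos_of_pos hx1
  have hmid := Real.convexOn_log_Gamma.2 (Set.mem_Ioi.2 hx) (Set.mem_Ioi.2 hx1)
      (by norm_num : (0:ℝ) ≤ 1/2) (by norm_num : (0:ℝ) ≤ 1/2) (by norm_num)
  simp only [smul_eq_mul, Function.comp] at hmid
  have h1 : (1/2)*x + (1/2)*(x+1) = x + 1/2 := by ring
  rw [h1] at hmid
  have h2 := Real.exp_le_exp.2 hmid
  rw [Real.exp_log (Real.Gamma_pos_of_pos (by linarith))] at h2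
  refine h2.trans (le_of_eq ?_)
  have e1 : Real.exp (1/2 * Real.log (Real.Gamma x) + 1/2 * Real.log (Real.Gamma (x+1)))
      = Real.Gamma x ^ ((1:ℝ)/2) * Real.Gamma (x+1) ^ ((1:ℝ)/2) := by
    rw [Real.rpow_def_of_pos hA, Real.rpow_def_of_pos hB, ← Real.exp_add]; ring_nf
  rw [e1, Real.Gamma_add_one hx.ne', Real.mul_rpow hx.le hA.le,
      show Real.Gamma x ^ ((1:ℝ)/2) * (x ^ ((1:ℝ)/2) * Real.Gamma x ^ ((1:ℝ)/2))
        = (Real.Gamma x ^ ((1:ℝ)/2) * Real.Gamma x ^ ((1:ℝ)/2)) * x ^ ((1:ℝ)/2) by ring,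
      ← Real.rpow_add hA]
  norm_num [Real.sqrt_eq_rpow]

lemma le_Gamma_add_half {x : ℝ} (hx : 1/2 ≤ x) :
    Real.Gamma x * Real.sqrt (x/2) ≤ Real.Gamma (x + 1/2) := by
  have hx0 : (0:ℝ) < x := lt_of_lt_of_le (by norm_num) hx
  have hA := Real.Gamma_pos_of_pos hx0
  have hup := Gamma_add_half_le (show (0:ℝ) < x + 1/2 by linarith)
  have h1 : x + 1/2 + 1/2 = x + 1 := by ring
  rw [h1, Real.Gamma_add_one hx0.ne'] at hup
  have hs : (0:ℝ) < Real.sqrt (x + 1/2) := Real.sqrt_pos.2 (by linarith)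
  have key : Real.Gamma x * Real.sqrt (x/2) * Real.sqrt (x + 1/2) ≤ x * Real.Gamma x := by
    rw [mul_assoc, ← Real.sqrt_mul (by positivity)]
    have hle : Real.sqrt (x/2 * (x + 1/2)) ≤ x := by
      have h := Real.sqrt_le_sqrt (show x/2*(x+1/2) ≤ x*x by nlinarith)
      rwa [Real.sqrt_mul_self hx0.le] at h
    calc Real.Gamma x * Real.sqrt (x/2*(x+1/2)) ≤ Real.Gamma x * x :=
          mul_le_mul_of_nonneg_left hle hA.le
      _ = x * Real.Gamma x := mul_comm _ _
  exact le_of_mul_le_mul_right (key.trans hup) hs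

lemma Gamma_ratio_bounds (m : ℕ) {x : ℝ} (hx : 1 ≤ x) :
    Real.Gamma x * (x/2) ^ ((m:ℝ)/2) ≤ Real.Gamma (x + m/2) ∧
      Real.Gamma (x + m/2) ≤ Real.Gamma x * (x + m/2) ^ ((m:ℝ)/2) := by
  have hx0 : (0:ℝ) < x := lt_of_lt_of_le one_pos hx
  have hA := Real.Gamma_pos_of_pos hx0
  induction m with
  | zero => simp
  | succ m ih =>
    obtain ⟨ihl, ihu⟩ := ih
    have hm0 : (0:ℝ) ≤ (m:ℝ)/2 := by positivity
    have hxm : (0:ℝ) < x + m/2 := by linarith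
    have hxm1 : (1:ℝ)/2 ≤ x + m/2 := by linarith
    have hcast : x + (↑(m+1):ℝ)/2 = (x + m/2) + 1/2 := by push_cast; ring
    have hexp : ((↑(m+1):ℝ))/2 = (m:ℝ)/2 + 1/2 := by push_cast; ring
    have h1 := le_Gamma_add_half hxm1
    have h1' := Gamma_add_half_le hxm
    constructor
    · rw [hcast]
      have hs : Real.sqrt (x/2) ≤ Real.sqrt ((x+m/2)/2) :=
        Real.sqrt_le_sqrt (by linarith)
      have e1 : (x/2 : ℝ) ^ ((↑(m+1):ℝ)/2) = (x/2)^((m:ℝ)/2) * Real.sqrt (x/2) := by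
        rw [Real.sqrt_eq_rpow, ← Real.rpow_add (by positivity), hexp]
      calc Real.Gamma x * (x/2) ^ ((↑(m+1):ℝ)/2)
          = Real.Gamma x * (x/2)^((m:ℝ)/2) * Real.sqrt (x/2) := by rw [e1]; ring
        _ ≤ Real.Gamma x * (x/2)^((m:ℝ)/2) * Real.sqrt ((x+m/2)/2) := by
            apply mul_le_mul_of_nonneg_left hs; positivity
        _ ≤ Real.Gamma (x + m/2) * Real.sqrt ((x+m/2)/2) :=
            mul_le_mul_of_nonneg_right ihl (Real.sqrt_nonneg _)
        _ ≤ _ := h1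
    · rw [hcast]
      have e2 : (x + m/2 : ℝ) ^ ((↑(m+1):ℝ)/2) = (x+m/2)^((m:ℝ)/2) * Real.sqrt (x+m/2) := by
        rw [Real.sqrt_eq_rpow, ← Real.rpow_add hxm, hexp]
      calc Real.Gamma (x + m/2 + 1/2) ≤ Real.Gamma (x+m/2) * Real.sqrt (x+m/2) := h1'
        _ ≤ Real.Gamma x * (x+m/2)^((m:ℝ)/2) * Real.sqrt (x+m/2) :=
            mul_le_mul_of_nonneg_right ihu (Real.sqrt_nonneg _)
        _ = Real.Gamma x * (x+m/2) ^ ((↑(m+1):ℝ)/2) := by rw [e2]; ring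
        _ ≤ Real.Gamma x * (x + (m:ℝ)/2 + 1/2) ^ ((↑(m+1):ℝ)/2) := by
            apply mul_le_mul_of_nonneg_left _ hA.le
            exact Real.rpow_le_rpow hxm.le (by linarith) (by positivity)

lemma Jval (m : ℕ) : ∫ r in Set.Ioi (0:ℝ), r ^ m * Real.exp (-r^2)
    = Real.Gamma (((m:ℝ)+1)/2) / 2 := by
  have h := integral_rpow_mul_exp_neg_rpow (p := 2) (q := (m:ℝ)) two_pos
      (lt_of_lt_of_le (by norm_num) (Nat.cast_nonneg m))
  rw [show (1:ℝ)/2 * Real.Gamma (((m:ℝ)+1)/2) = Real.Gamma (((m:ℝ)+1)/2)/2 by ring] at h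
  rw [← h]
  refine setIntegral_congr_fun measurableSet_Ioi fun x hx => ?_
  rw [Real.rpow_natCast]
  norm_num [Real.rpow_two]

lemma integral_eq_toSphere_mul_radial {E : Type*} [NormedAddCommGroup E] [NormedSpace ℝ E]
    [MeasurableSpace E] [BorelSpace E] [FiniteDimensional ℝ E] [Nontrivial E]
    (μ : Measure E) [μ.IsAddHaarMeasure]
    (φ : E → ℝ) (f : Metric.sphere (0:E) 1 → ℝ) (g : ℝ → ℝ)
    (hfg : ∀ (y : Metric.sphere (0:E) 1) (r : ℝ), 0 < r → φ (r • (y:E)) = f y * g r) :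
    ∫ x, φ x ∂μ = (∫ y, f y ∂μ.toSphere) *
      ∫ r in Set.Ioi (0:ℝ), r ^ (Module.finrank ℝ E - 1) * g r := by
  calc
  ∫ x, φ x ∂μ = ∫ x : ({0}ᶜ : Set E), φ x.1 ∂(μ.comap (↑)) := by
    rw [integral_subtype_comap (measurableSet_singleton _).compl,
      restrict_compl_singleton]
  _ = ∫ z : Metric.sphere (0:E) 1 × Set.Ioi (0:ℝ), f z.1 * g z.2.1
        ∂(μ.toSphere.prod (Measure.volumeIoiPow (Module.finrank ℝ E - 1))) := by
    rw [← μ.measurePreserving_homeomorphUnitSphereProd.integral_comp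
      (Homeomorph.measurableEmbedding _) (fun z => f z.1 * g z.2.1)]
    refine integral_congr_ae (Filter.Eventually.of_forall fun x => ?_)
    have hx : x.1 ≠ 0 := x.2
    have hnorm : 0 < ‖x.1‖ := norm_pos_iff.2 hx
    have := hfg ((homeomorphUnitSphereProd E) x).1 ‖x.1‖ hnorm
    simp only [homeomorphUnitSphereProd_apply_fst_coe, homeomorphUnitSphereProd_apply_snd_coe,
      smul_inv_smul₀ hnorm.ne'] at this ⊢
    exact this
  _ = (∫ y, f y ∂μ.toSphere) *
        ∫ r : Set.Ioi (0:ℝ), g r.1 ∂(Measure.volumeIoiPow (Module.finrank ℝ E - 1)) :=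
    integral_prod_mul f (fun r : Set.Ioi (0:ℝ) => g r.1)
  _ = _ := by
    congr 1
    simp only [Measure.volumeIoiPow, ENNReal.ofReal]
    rw [integral_withDensity_eq_integral_smul
      ((measurable_subtype_coe.pow_const _).real_toNNReal),
      integral_subtype_comap measurableSet_Ioi
        (fun a : ℝ => Real.toNNReal (a ^ (Module.finrank ℝ E - 1)) • g a),
      setIntegral_congr_fun measurableSet_Ioi fun x hx => ?_]
    rw [NNReal.smul_def, Real.coe_toNNReal _ (pow_nonneg hx.out.le _), smul_eq_mul]

lemma sphere_polar (n k : ℕ) :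
    ∫ x : Esp n, ((x 0)^2 + (x 1)^2)^k * Real.exp (-‖x‖^2)
      = (∫ y : Sph n, (((y:Esp n) 0)^2 + ((y:Esp n) 1)^2)^k ∂ sphMeasure n)
        * ∫ r in Set.Ioi (0:ℝ), r ^ (2*k+n) * Real.exp (-r^2) := by
  have h := integral_eq_toSphere_mul_radial (volume : Measure (Esp n))
    (fun x => ((x 0)^2 + (x 1)^2)^k * Real.exp (-‖x‖^2))
    (fun y => (((y:Esp n) 0)^2 + ((y:Esp n) 1)^2)^k)
    (fun r => r^(2*k) * Real.exp (-r^2)) ?_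
  · rw [h]
    congr 1
    rw [show Module.finrank ℝ (Esp n) - 1 = n by
      simp [finrank_euclideanSpace_fin]]
    refine setIntegral_congr_fun measurableSet_Ioi fun x hx => ?_
    ring
  · intro y r hr
    have hy : ‖(y:Esp n)‖ = 1 := mem_sphere_zero_iff_norm.1 y.2
    have hsm : ∀ i, (r • (y:Esp n)) i = r * (y:Esp n) i := fun i => rfl
    have hnrm : ‖r • (y:Esp n)‖^2 = r^2 := by
      rw [norm_smul, hy, mul_one, Real.norm_eq_abs, sq_abs]
    simp only [hsm, hnrm]
    have : (r * (y:Esp n) 0)^2 + (r * (y:Esp n) 1)^2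
        = r^2 * (((y:Esp n) 0)^2 + ((y:Esp n) 1)^2) := by ring
    rw [this, mul_pow, ← pow_mul]
    ring

lemma esp_to_pi (n k : ℕ) :
    ∫ x : Esp n, ((x 0)^2 + (x 1)^2)^k * Real.exp (-‖x‖^2)
      = ∫ x : Fin (n+1) → ℝ, ((x 0)^2 + (x 1)^2)^k * Real.exp (-(∑ i, (x i)^2)) := by
  rw [← MeasurePreserving.integral_comp'
    (MeasurePreserving.symm _ (EuclideanSpace.volume_preserving_symm_measurableEquiv_toLp (ι := Fin (n+1))))
    (fun y : Esp n => ((y 0)^2 + (y 1)^2)^k * Real.exp (-‖y‖^2))]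
  refine integral_congr_ae (Filter.Eventually.of_forall fun x => ?_)
  show ((x 0)^2 + (x 1)^2)^k * Real.exp (-‖(MeasurableEquiv.toLp 2 (Fin (n+1) → ℝ)).symm.symm x‖^2) = _
  have : ‖(MeasurableEquiv.toLp 2 (Fin (n+1) → ℝ)).symm.symm x‖^2 = ∑ i, (x i)^2 := by
    rw [EuclideanSpace.norm_eq, Real.sq_sqrt (by positivity)]
    exact Finset.sum_congr rfl fun i _ => by rw [Real.norm_eq_abs, sq_abs]; rfl
  rw [this]

lemma gauss_split (m k : ℕ) :
    ∫ x : Esp (m+1), ((x 0)^2 + (x 1)^2)^k * Real.exp (-‖x‖^2)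
      = (∫ u : Esp 1, ((u 0)^2 + (u 1)^2)^k * Real.exp (-‖u‖^2)) * Real.sqrt π ^ m := by
  classical
  rw [esp_to_pi]
  have h01 : (0 : Fin (m+2)) ≠ 1 := by
    intro h
    have := congrArg Fin.val h
    simp [Fin.val_zero, Fin.val_one] at this
  set p : Fin (m+2) → Prop := fun i => i = 0 ∨ i = 1 with hp
  let i0 : {i : Fin (m+2) // p i} := ⟨0, Or.inl rfl⟩
  let i1 : {i : Fin (m+2) // p i} := ⟨1, Or.inr rfl⟩
  let eqv : Fin 2 ≃ {i : Fin (m+2) // p i} :=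
    { toFun := fun t => if t = 0 then i0 else i1
      invFun := fun j => if j.1 = 0 then 0 else 1
      left_inv := by
        intro t
        fin_cases t
        · simp [i0]
        · simp [i1, h01.symm]
      right_inv := by
        rintro ⟨i, hi | hi⟩
        · subst hi; simp [i0]
        · subst hi; simp [i0, i1, h01.symm] }
  have hsum : ∀ x : Fin (m+2) → ℝ,
      (∑ j : {i // p i}, (x j.1)^2) + (∑ j : {i // ¬ p i}, (x j.1)^2) = ∑ i, (x i)^2 := by
    intro x
    rw [← Finset.sum_filter_add_sum_filter_not Finset.univ p (fun i => (x i)^2)]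
    congr 1
    · exact (Finset.sum_subtype (Finset.univ.filter fun i => p i) (fun i => by
        simp only [Finset.mem_filter, Finset.mem_univ, true_and]) (fun i => (x i)^2)).symm
    · exact (Finset.sum_subtype (Finset.univ.filter fun i => ¬ p i) (fun i => by
        simp only [Finset.mem_filter, Finset.mem_univ, true_and]) (fun i => (x i)^2)).symm
  calc ∫ x : Fin (m+2) → ℝ, ((x 0)^2+(x 1)^2)^k * Real.exp (-(∑ i, (x i)^2))
      = ∫ z : ({i // p i} → ℝ) × ({i // ¬ p i} → ℝ),
          (((z.1 i0)^2 + (z.1 i1)^2)^k * Real.exp (-(∑ j, (z.1 j)^2)))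
          * Real.exp (-(∑ j : {i // ¬ p i}, (z.2 j)^2)) := by
        rw [← (volume_preserving_piEquivPiSubtypeProd (fun _ : Fin (m+2) => ℝ) p).integral_comp'
          (fun z : ({i // p i} → ℝ) × ({i // ¬ p i} → ℝ) =>
            (((z.1 i0)^2 + (z.1 i1)^2)^k * Real.exp (-(∑ j, (z.1 j)^2)))
            * Real.exp (-(∑ j : {i // ¬ p i}, (z.2 j)^2)))]
        refine integral_congr_ae (Filter.Eventually.of_forall fun x => ?_)
        show ((x 0)^2+(x 1)^2)^k * Real.exp (-(∑ i, (x i)^2))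
          = (((x i0.1)^2 + (x i1.1)^2)^k * Real.exp (-(∑ j : {i // p i}, (x j.1)^2)))
            * Real.exp (-(∑ j : {i // ¬ p i}, (x j.1)^2))
        rw [mul_assoc, ← Real.exp_add, ← neg_add, hsum x]
    _ = (∫ a : {i // p i} → ℝ, ((a i0)^2 + (a i1)^2)^k * Real.exp (-(∑ j, (a j)^2)))
          * ∫ b : {i // ¬ p i} → ℝ, Real.exp (-(∑ j, (b j)^2)) :=
        by
        rw [Measure.volume_eq_prod]
        exact integral_prod_mul
          (f := fun a : {i // p i} → ℝ => ((a i0)^2 + (a i1)^2)^k * Real.exp (-(∑ j, (a j)^2)))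
          (g := fun b : {i // ¬ p i} → ℝ => Real.exp (-(∑ j, (b j)^2)))
    _ = (∫ u : Esp 1, ((u 0)^2 + (u 1)^2)^k * Real.exp (-‖u‖^2)) * Real.sqrt π ^ m := by
        congr 1
        · rw [← (volume_measurePreserving_piCongrLeft (fun _ : {i // p i} => ℝ) eqv).integral_comp'
            (fun a : {i // p i} → ℝ => ((a i0)^2 + (a i1)^2)^k * Real.exp (-(∑ j, (a j)^2)))]
          refine Eq.trans ?_ (esp_to_pi 1 k).symm
          refine integral_congr_ae (Filter.Eventually.of_forall fun c => ?_)
          have e0 : (MeasurableEquiv.piCongrLeft (fun _ : {i // p i} => ℝ) eqv) c i0 = c 0 := by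
            rw [MeasurableEquiv.coe_piCongrLeft]
            exact Equiv.piCongrLeft_apply_apply (fun _ => ℝ) eqv c 0
          have e1 : (MeasurableEquiv.piCongrLeft (fun _ : {i // p i} => ℝ) eqv) c i1 = c 1 := by
            rw [MeasurableEquiv.coe_piCongrLeft]
            exact Equiv.piCongrLeft_apply_apply (fun _ => ℝ) eqv c 1
          have esum : ∑ j : {i // p i},
              ((MeasurableEquiv.piCongrLeft (fun _ : {i // p i} => ℝ) eqv) c j)^2
              = (c 0)^2 + (c 1)^2 := by
            rw [← Equiv.sum_comp eqv
              (fun j => ((MeasurableEquiv.piCongrLeft (fun _ : {i // p i} => ℝ) eqv) c j)^2),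
              Fin.sum_univ_two]
            simp only [MeasurableEquiv.coe_piCongrLeft, Equiv.piCongrLeft_apply_apply]
          show ((MeasurableEquiv.piCongrLeft (fun _ : {i // p i} => ℝ) eqv) c i0 ^2
              + (MeasurableEquiv.piCongrLeft (fun _ : {i // p i} => ℝ) eqv) c i1 ^2)^k
              * Real.exp (-(∑ j : {i // p i},
                  ((MeasurableEquiv.piCongrLeft (fun _ : {i // p i} => ℝ) eqv) c j)^2))
              = ((c 0)^2 + (c 1)^2)^k * Real.exp (-(∑ i : Fin 2, (c i)^2))
          rw [e0, e1, esum, Fin.sum_univ_two]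
        · have hprod : ∀ b : {i // ¬ p i} → ℝ,
              Real.exp (-(∑ j, (b j)^2)) = ∏ j, Real.exp (-((b j)^2)) := by
            intro b
            rw [← Real.exp_sum, ← Finset.sum_neg_distrib]
          simp_rw [hprod]
          rw [MeasureTheory.integral_fintype_prod_volume_eq_pow (fun x : ℝ => Real.exp (-(x^2)))]
          have hg : ∫ x : ℝ, Real.exp (-(x^2)) = Real.sqrt π := by
            have := integral_gaussian (1:ℝ)
            simpa using this
          rw [hg]
          congr 1
          have hcard2 : Fintype.card {i : Fin (m+2) // p i} = 2 := by
            rw [Fintype.card_subtype]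
            have : Finset.univ.filter p = {0, 1} := by
              ext i; simp [hp]
            rw [this, Finset.card_pair h01]
          rw [Fintype.card_subtype_compl, hcard2, Fintype.card_fin]
          omega

lemma sph1_int (k : ℕ) :
    ∫ y : Sph 1, (((y:Esp 1) 0)^2 + ((y:Esp 1) 1)^2)^k ∂ sphMeasure 1
      = (sphMeasure 1 Set.univ).toReal := by
  have h : ∀ y : Sph 1, (((y:Esp 1) 0)^2 + ((y:Esp 1) 1)^2)^k = 1 := by
    intro y
    have hy : ‖(y:Esp 1)‖ = 1 := mem_sphere_zero_iff_norm.1 y.2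
    have hs : ((y:Esp 1) 0)^2 + ((y:Esp 1) 1)^2 = 1 := by
      have h1 : ‖(y:Esp 1)‖^2 = ∑ i : Fin 2, ((y:Esp 1) i)^2 := by
        rw [EuclideanSpace.norm_eq, Real.sq_sqrt (by positivity)]
        exact Finset.sum_congr rfl fun i _ => by rw [Real.norm_eq_abs, sq_abs]
      rw [hy] at h1
      rw [← Fin.sum_univ_two (fun i => ((y:Esp 1) i)^2), ← h1]
      norm_num
    rw [hs, one_pow]
  rw [integral_congr_ae (Filter.Eventually.of_forall h), integral_const, smul_eq_mul, mul_one]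
  rfl

lemma S1_pos : 0 < (sphMeasure 1 Set.univ).toReal := by
  rw [sphMeasure, Measure.toSphere_apply_univ]
  have h1 : ((Module.finrank ℝ (Esp 1) : ℕ) : ENNReal) ≠ 0 := by
    simp [finrank_euclideanSpace_fin]
  have h2 : (volume (Metric.ball (0:Esp 1) 1)) ≠ 0 := (measure_ball_pos _ _ one_pos).ne'
  have h3 : (volume (Metric.ball (0:Esp 1) 1)) ≠ ⊤ := measure_ball_lt_top.ne
  exact ENNReal.toReal_pos (mul_ne_zero h1 h2)
    (ENNReal.mul_ne_top (ENNReal.natCast_ne_top _) h3)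

lemma I_eq (m k : ℕ) :
    ∫ y : Sph (m+1), (((y:Esp (m+1)) 0)^2 + ((y:Esp (m+1)) 1)^2)^k ∂ sphMeasure (m+1)
      = (sphMeasure 1 Set.univ).toReal * Real.sqrt π ^ m
        * Real.Gamma ((k:ℝ)+1) / Real.Gamma ((k:ℝ)+1+(m:ℝ)/2) := by
  have hG : (0:ℝ) < Real.Gamma ((k:ℝ)+1+(m:ℝ)/2) := Real.Gamma_pos_of_pos (by positivity)
  have h1 := sphere_polar (m+1) k
  have h2 := sphere_polar 1 k
  rw [gauss_split, h2, sph1_int, Jval, Jval] at h1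
  have e1 : ((((2*k+(m+1)):ℕ):ℝ)+1)/2 = (k:ℝ)+1+(m:ℝ)/2 := by push_cast; ring
  have e2 : ((((2*k+1):ℕ):ℝ)+1)/2 = (k:ℝ)+1 := by push_cast; ring
  rw [e1, e2] at h1
  field_simp at h1 ⊢
  linarith [h1]

lemma I_bounds (m : ℕ) : ∃ cI CI : ℝ, 0 < cI ∧ 0 < CI ∧ ∀ k : ℕ, 1 ≤ k →
    cI ≤ (∫ y : Sph (m+1), (((y:Esp (m+1)) 0)^2 + ((y:Esp (m+1)) 1)^2)^k ∂ sphMeasure (m+1))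
          * (k:ℝ) ^ ((m:ℝ)/2)
    ∧ (∫ y : Sph (m+1), (((y:Esp (m+1)) 0)^2 + ((y:Esp (m+1)) 1)^2)^k ∂ sphMeasure (m+1))
          * (k:ℝ) ^ ((m:ℝ)/2) ≤ CI := by
  have hSpos := S1_pos
  have hsp : (0:ℝ) < Real.sqrt π ^ m := by
    have : (0:ℝ) < Real.sqrt π := Real.sqrt_pos.2 Real.pi_pos
    positivity
  refine ⟨(sphMeasure 1 Set.univ).toReal * Real.sqrt π ^ m / ((m:ℝ)+2) ^ ((m:ℝ)/2),
    (sphMeasure 1 Set.univ).toReal * Real.sqrt π ^ m * 2 ^ ((m:ℝ)/2),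
    by positivity, by positivity, ?_⟩
  intro k hk
  have hk1 : (1:ℝ) ≤ (k:ℝ) := by exact_mod_cast hk
  have hx : (1:ℝ) ≤ (k:ℝ)+1 := by linarith
  have hG1 : (0:ℝ) < Real.Gamma ((k:ℝ)+1) := Real.Gamma_pos_of_pos (by positivity)
  have hG2 : (0:ℝ) < Real.Gamma ((k:ℝ)+1+(m:ℝ)/2) := Real.Gamma_pos_of_pos (by positivity)
  obtain ⟨hl, hu⟩ := Gamma_ratio_bounds m hx
  have hkpos : (0:ℝ) < (k:ℝ) := by linarith
  have hkr : (0:ℝ) < (k:ℝ) ^ ((m:ℝ)/2) := Real.rpow_pos_of_pos hkpos _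
  have h2pos : (0:ℝ) < (2:ℝ) ^ ((m:ℝ)/2) := by positivity
  rw [I_eq m k]
  set D := (sphMeasure 1 Set.univ).toReal * Real.sqrt π ^ m with hD
  have hDpos : 0 < D := by positivity
  constructor
  · have hbase : ((k:ℝ)+1+(m:ℝ)/2) ≤ ((m:ℝ)+2) * k := by nlinarith
    have h3 : ((k:ℝ)+1+(m:ℝ)/2) ^ ((m:ℝ)/2) ≤ (((m:ℝ)+2) * k) ^ ((m:ℝ)/2) :=
      Real.rpow_le_rpow (by positivity) hbase (by positivity)
    have h4 : (((m:ℝ)+2) * k) ^ ((m:ℝ)/2) = ((m:ℝ)+2) ^ ((m:ℝ)/2) * (k:ℝ) ^ ((m:ℝ)/2) :=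
      Real.mul_rpow (by positivity) (by positivity)
    have h5 : Real.Gamma ((k:ℝ)+1+(m:ℝ)/2)
        ≤ Real.Gamma ((k:ℝ)+1) * (((m:ℝ)+2) ^ ((m:ℝ)/2) * (k:ℝ) ^ ((m:ℝ)/2)) := by
      refine hu.trans ?_
      rw [← h4]
      exact mul_le_mul_of_nonneg_left h3 hG1.le
    rw [div_mul_eq_mul_div, div_le_div_iff₀ (by positivity) hG2]
    nlinarith [mul_le_mul_of_nonneg_left h5 hDpos.le]
  · have hbase : (k:ℝ)/2 ≤ ((k:ℝ)+1)/2 := by linarith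
    have h3 : ((k:ℝ)/2) ^ ((m:ℝ)/2) ≤ (((k:ℝ)+1)/2) ^ ((m:ℝ)/2) :=
      Real.rpow_le_rpow (by positivity) hbase (by positivity)
    have h4 : ((k:ℝ)/2) ^ ((m:ℝ)/2) = (k:ℝ) ^ ((m:ℝ)/2) / 2 ^ ((m:ℝ)/2) :=
      Real.div_rpow hkpos.le (by norm_num) _
    have h6 : Real.Gamma ((k:ℝ)+1) * ((k:ℝ)/2) ^ ((m:ℝ)/2)
        ≤ Real.Gamma ((k:ℝ)+1+(m:ℝ)/2) :=
      le_trans (mul_le_mul_of_nonneg_left h3 hG1.le) hl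
    have h5' : Real.Gamma ((k:ℝ)+1) * (k:ℝ) ^ ((m:ℝ)/2)
        ≤ Real.Gamma ((k:ℝ)+1+(m:ℝ)/2) * 2 ^ ((m:ℝ)/2) := by
      have h7 := mul_le_mul_of_nonneg_right h6 h2pos.le
      rw [h4, mul_assoc, div_mul_cancel₀ _ h2pos.ne'] at h7
      exact h7
    rw [div_mul_eq_mul_div, div_le_iff₀ hG2]
    nlinarith [mul_le_mul_of_nonneg_left h5' hDpos.le]

lemma norm_Qfun (n k : ℕ) (x : Sph n) :
    ‖Qfun n k x‖ = Real.sqrt (((x:Esp n) 0)^2 + ((x:Esp n) 1)^2) ^ k := by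
  rw [Qfun, norm_pow]
  congr 1
  have h2 : ‖(((x:Esp n) 0 : ℝ) : ℂ) + Complex.I * (((x:Esp n) 1 : ℝ) : ℂ)‖^2
      = ((x:Esp n) 0)^2 + ((x:Esp n) 1)^2 := by
    rw [Complex.sq_norm, Complex.normSq_apply]
    simp
    ring
  rw [← Real.sqrt_sq (norm_nonneg _), h2]

lemma tfun_split {n : ℕ} (hn : 1 ≤ n) (x : Sph n) :
    ((x:Esp n) 0)^2 + ((x:Esp n) 1)^2 + tfun n x = 1 := by
  obtain ⟨m, rfl⟩ : ∃ m, n = m + 1 := ⟨n-1, by omega⟩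
  have h01 : (0 : Fin (m+2)) ≠ 1 := by
    intro h
    have := congrArg Fin.val h
    simp [Fin.val_zero, Fin.val_one] at this
  have htotal : ∑ i, ((x:Esp (m+1)) i)^2 = 1 := by
    have hy : ‖(x:Esp (m+1))‖ = 1 := mem_sphere_zero_iff_norm.1 x.2
    have h1 : ‖(x:Esp (m+1))‖^2 = ∑ i, ((x:Esp (m+1)) i)^2 := by
      rw [EuclideanSpace.norm_eq, Real.sq_sqrt (by positivity)]
      exact Finset.sum_congr rfl fun i _ => by rw [Real.norm_eq_abs, sq_abs]
    rw [hy] at h1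
    rw [← h1]; norm_num
  have hsplit := Finset.sum_filter_add_sum_filter_not Finset.univ
    (fun i : Fin (m+2) => i ≠ 0 ∧ i ≠ 1) (fun i => ((x:Esp (m+1)) i)^2)
  have hfilter : Finset.univ.filter (fun i : Fin (m+2) => ¬(i ≠ 0 ∧ i ≠ 1)) = {0, 1} := by
    ext i
    simp only [Finset.mem_filter, Finset.mem_univ, true_and, not_and_or, not_not, ne_eq,
      Finset.mem_insert, Finset.mem_singleton]
  rw [hfilter, Finset.sum_pair h01, htotal] at hsplit
  rw [tfun]
  linarith [hsplit]

end GaussAux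

/-- The Gaussian beam bounds for the normalized highest weight spherical harmonics
(Section 4 of the paper): `|Q̃_k(x)| ≈ k^{(n-1)/4} e^{-k t(x)/2}`. -/
theorem highest_weight_gaussian_beam_bounds (n : ℕ) (hn : 2 ≤ n) :
    ∃ c C : ℝ, 0 < c ∧ 0 < C ∧ ∀ k : ℕ, 1 ≤ k →
      (∀ x : Sph n,
        ‖Qtilde n k x‖ ≤
          C * (k : ℝ) ^ (((n : ℝ) - 1) / 4) * Real.exp (-((k : ℝ) * tfun n x) / 2)) ∧
      (∀ x : Sph n, tfun n x ≤ 1 / 2 →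
        c * (k : ℝ) ^ (((n : ℝ) - 1) / 4) * Real.exp (-((k : ℝ) * tfun n x)) ≤
          ‖Qtilde n k x‖) := by
  obtain ⟨m, rfl⟩ : ∃ m, n = m + 1 := ⟨n-1, by omega⟩
  obtain ⟨cI, CI, hcI, hCI, hIk⟩ := I_bounds m
  refine ⟨1 / Real.sqrt CI, 1 / Real.sqrt cI,
    by positivity, by positivity, ?_⟩
  intro k hk
  set I := ∫ y : Sph (m+1), (((y:Esp (m+1)) 0)^2 + ((y:Esp (m+1)) 1)^2)^k ∂ sphMeasure (m+1)
    with hI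
  obtain ⟨hlow, hup⟩ := hIk k hk
  have hk1 : (1:ℝ) ≤ (k:ℝ) := by exact_mod_cast hk
  have hkpos : (0:ℝ) < (k:ℝ) := by linarith
  set J := (k:ℝ) ^ ((m:ℝ)/2) with hJ
  have hJpos : 0 < J := Real.rpow_pos_of_pos hkpos _
  have hIpos : 0 < I := by nlinarith
  -- √J = k^{((n-1))/4}
  have hsqJ : Real.sqrt J = (k:ℝ) ^ (((↑(m+1):ℝ) - 1) / 4) := by
    rw [hJ, Real.sqrt_eq_rpow, ← Real.rpow_mul hkpos.le]
    congr 1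
    push_cast
    ring
  -- Qnorm = √I
  have hQnorm : Qnorm (m+1) k = Real.sqrt I := by
    rw [Qnorm, hI]
    congr 1
    refine integral_congr_ae (Filter.Eventually.of_forall fun y => ?_)
    show ‖Qfun (m+1) k y‖ ^ 2 = _
    rw [norm_Qfun, ← pow_mul, mul_comm k 2, pow_mul,
      Real.sq_sqrt (by positivity)]
  have hsqIpos : 0 < Real.sqrt I := Real.sqrt_pos.2 hIpos
  have hQt : ∀ x : Sph (m+1), ‖Qtilde (m+1) k x‖ = ‖Qfun (m+1) k x‖ / Real.sqrt I := by
    intro x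
    rw [Qtilde, norm_div, hQnorm, Complex.norm_real, Real.norm_eq_abs,
      abs_of_nonneg (Real.sqrt_nonneg _)]
  -- bounds on √I
  have hsqI_low : Real.sqrt cI / Real.sqrt J ≤ Real.sqrt I := by
    have h1 : cI / J ≤ I := (div_le_iff₀ hJpos).2 hlow
    have h2 := Real.sqrt_le_sqrt h1
    rwa [Real.sqrt_div hcI.le] at h2
  have hsqI_up : Real.sqrt I ≤ Real.sqrt CI / Real.sqrt J := by
    have h1 : I ≤ CI / J := (le_div_iff₀ hJpos).2 hup
    have h2 := Real.sqrt_le_sqrt h1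
    rwa [Real.sqrt_div hCI.le] at h2
  constructor
  · -- upper bound
    intro x
    have hτ0 : 0 ≤ tfun (m+1) x := Finset.sum_nonneg fun i _ => sq_nonneg _
    have hsp := tfun_split (by omega) x
    set τ := tfun (m+1) x with hτ
    set s := ((x:Esp (m+1)) 0)^2 + ((x:Esp (m+1)) 1)^2 with hs
    have hs0 : 0 ≤ s := by positivity
    have hs1 : s = 1 - τ := by linarith
    have hN : ‖Qfun (m+1) k x‖ ≤ Real.exp (-((k:ℝ) * τ)/2) := by
      rw [norm_Qfun]
      have h1 : s ≤ Real.exp (-τ) := by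
        have := Real.add_one_le_exp (-τ)
        linarith
      have h3 : Real.exp (-τ) = (Real.exp (-(τ/2)))^2 := by
        rw [sq, ← Real.exp_add]; congr 1; ring
      have h2 : Real.sqrt s ≤ Real.exp (-(τ/2)) := by
        calc Real.sqrt s ≤ Real.sqrt (Real.exp (-τ)) := Real.sqrt_le_sqrt h1
          _ = Real.exp (-(τ/2)) := by rw [h3, Real.sqrt_sq (Real.exp_pos _).le]
      calc Real.sqrt s ^ k ≤ Real.exp (-(τ/2)) ^ k :=
            pow_le_pow_left₀ (Real.sqrt_nonneg _) h2 k
        _ = Real.exp (-((k:ℝ)*τ)/2) := by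
            rw [← Real.exp_nat_mul]; congr 1; ring
    rw [hQt x]
    calc ‖Qfun (m+1) k x‖ / Real.sqrt I
        ≤ ‖Qfun (m+1) k x‖ / (Real.sqrt cI / Real.sqrt J) := by
          gcongr
      _ = ‖Qfun (m+1) k x‖ * Real.sqrt J / Real.sqrt cI := by rw [div_div_eq_mul_div]
      _ ≤ Real.exp (-((k:ℝ)*τ)/2) * Real.sqrt J / Real.sqrt cI := by gcongr
      _ = 1 / Real.sqrt cI * (k:ℝ) ^ (((↑(m+1):ℝ) - 1)/4) * Real.exp (-((k:ℝ)*τ)/2) := by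
          rw [hsqJ]; ring
  · -- lower bound
    intro x hτhalf
    have hτ0 : 0 ≤ tfun (m+1) x := Finset.sum_nonneg fun i _ => sq_nonneg _
    have hsp := tfun_split (by omega) x
    set τ := tfun (m+1) x with hτ
    set s := ((x:Esp (m+1)) 0)^2 + ((x:Esp (m+1)) 1)^2 with hs
    have hs1 : s = 1 - τ := by linarith
    have hNl : Real.exp (-((k:ℝ)*τ)) ≤ ‖Qfun (m+1) k x‖ := by
      rw [norm_Qfun]
      have hpos : (0:ℝ) < 1 + 2*τ := by linarith
      have h1 : Real.exp (-(2*τ)) ≤ s := by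
        have he := Real.add_one_le_exp (2*τ)
        have h2 : Real.exp (-(2*τ)) ≤ 1/(1+2*τ) := by
          rw [Real.exp_neg, one_div]
          exact inv_anti₀ hpos (by linarith)
        have h3 : 1/(1+2*τ) ≤ 1 - τ := by
          rw [div_le_iff₀ hpos]; nlinarith
        linarith
      have h3 : Real.exp (-(2*τ)) = (Real.exp (-τ))^2 := by
        rw [sq, ← Real.exp_add]; congr 1; ring
      have h2 : Real.exp (-τ) ≤ Real.sqrt s := by
        calc Real.exp (-τ) = Real.sqrt (Real.exp (-(2*τ))) := by
              rw [h3, Real.sqrt_sq (Real.exp_pos _).le]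
          _ ≤ Real.sqrt s := Real.sqrt_le_sqrt h1
      calc Real.exp (-((k:ℝ)*τ)) = Real.exp (-τ) ^ k := by
            rw [← Real.exp_nat_mul]; congr 1; ring
        _ ≤ Real.sqrt s ^ k := pow_le_pow_left₀ (Real.exp_pos _).le h2 k
    rw [hQt x]
    calc 1 / Real.sqrt CI * (k:ℝ) ^ (((↑(m+1):ℝ) - 1)/4) * Real.exp (-((k:ℝ)*τ))
        = Real.exp (-((k:ℝ)*τ)) * Real.sqrt J / Real.sqrt CI := by rw [hsqJ]; ring
      _ ≤ ‖Qfun (m+1) k x‖ * Real.sqrt J / Real.sqrt CI := by gcongr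
      _ = ‖Qfun (m+1) k x‖ / (Real.sqrt CI / Real.sqrt J) := by rw [div_div_eq_mul_div]
      _ ≤ ‖Qfun (m+1) k x‖ / Real.sqrt I := by
          gcongr
end
end

section
/- For every n ≥ 2 there is a constant C > 0, depending only on n, such that for every integer k ≥ 1, every r with k⁻¹ ≤ r ≤ k^{−1/2}, and every x ∈ Sⁿ, the L²(σ)-normalized highest weight spherical harmonic Q̃_k = Q_k / ‖Q_k‖_{L²(σ)} satisfies ‖Q̃_k‖_{L²(B_r(x))} ≤ C r^{n/2} k^{(n−1)/4}. In particular, taking r = k⁻¹ gives sup_{x ∈ Sⁿ} r^{−1/2} ‖Q̃_k‖_{L²(B_r(x))} ≤ C r^{(n−1)/4}. -/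
open MeasureTheory Real

noncomputable section

section Aux
variable {n : ℕ}

lemma sum_sq_coords (x : Sph n) : ∑ i, ((x : Esp n) i)^2 = 1 := by
  have h : ‖(x : Esp n)‖ = 1 := mem_sphere_zero_iff_norm.mp x.2
  have h2 : ‖(x : Esp n)‖ ^ 2 = ∑ i, ((x : Esp n) i)^2 := by
    rw [EuclideanSpace.norm_eq, Real.sq_sqrt (by positivity)]
    simp [sq_abs]
  rw [← h2, h, one_pow]

lemma norm_Qfun_sq (k : ℕ) (x : Sph n) :
    ‖Qfun n k x‖^2 = (((x : Esp n) 0)^2 + ((x : Esp n) 1)^2)^k := by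
  rw [Qfun, norm_pow, ← pow_mul, mul_comm k 2, pow_mul]
  congr 1
  rw [Complex.sq_norm, Complex.normSq_apply]
  simp
  ring

lemma continuous_Qfun (k : ℕ) : Continuous (Qfun n k) := by
  unfold Qfun
  have h0 : Continuous fun x : Sph n => (x : Esp n) 0 :=
    (EuclideanSpace.proj (0 : Fin (n+1))).continuous.comp continuous_subtype_val
  have h1 : Continuous fun x : Sph n => (x : Esp n) 1 :=
    (EuclideanSpace.proj (1 : Fin (n+1))).continuous.comp continuous_subtype_val
  exact ((Complex.continuous_ofReal.comp h0).add
    (continuous_const.mul (Complex.continuous_ofReal.comp h1))).pow k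

lemma isOpen_gball (x : Sph n) (r : ℝ) : IsOpen (gball x r) := by
  have : Continuous fun y : Sph n => gdist x y := by
    unfold gdist
    exact Real.continuous_arccos.comp ((continuous_const.inner continuous_subtype_val))
  exact isOpen_lt this continuous_const

instance : IsFiniteMeasure (sphMeasure n) := by
  unfold sphMeasure; infer_instance
end Aux
open Pointwise

section CapBound
variable {n : ℕ}

lemma chord_le_gdist (x z : Sph n) : ‖(z : Esp n) - (x : Esp n)‖ ≤ gdist x z := by
  have hxn : ‖(x : Esp n)‖ = 1 := mem_sphere_zero_iff_norm.mp x.2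
  have hzn : ‖(z : Esp n)‖ = 1 := mem_sphere_zero_iff_norm.mp z.2
  have habs : |(inner ℝ (x : Esp n) (z : Esp n) : ℝ)| ≤ 1 := by
    have h := abs_real_inner_le_norm (x : Esp n) (z : Esp n)
    rwa [hxn, hzn, mul_one] at h
  set θ := gdist x z with hθ
  have hθ0 : 0 ≤ θ := Real.arccos_nonneg _
  have hcos : Real.cos θ = (inner ℝ (x : Esp n) (z : Esp n) : ℝ) :=
    Real.cos_arccos (neg_le_of_abs_le habs) (le_of_abs_le habs)
  have hsq : ‖(z : Esp n) - (x : Esp n)‖ ^ 2 = 2 - 2 * Real.cos θ := by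
    rw [norm_sub_sq_real, hzn, hxn, hcos, real_inner_comm]
    ring
  have h2 : 2 - 2 * Real.cos θ ≤ θ ^ 2 := by
    have := Real.one_sub_sq_div_two_le_cos (x := θ)
    linarith
  calc ‖(z : Esp n) - (x : Esp n)‖ = √(‖(z : Esp n) - (x : Esp n)‖^2) := by
        rw [Real.sqrt_sq (norm_nonneg _)]
    _ ≤ √(θ^2) := Real.sqrt_le_sqrt (by linarith)
    _ = θ := by rw [Real.sqrt_sq hθ0]

lemma cone_subset_cover {x : Sph n} {r : ℝ} (hr0 : 0 < r) :
    (Set.Ioo (0:ℝ) 1 • ((↑) '' gball x r) : Set (Esp n)) ⊆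
      ⋃ j ∈ Finset.range (⌊1/r⌋₊ + 1), Metric.ball (((j : ℝ) * r) • (x : Esp n)) (2*r) := by
  intro y hy
  rcases hy with ⟨a, ha, w, hw, rfl⟩
  rcases hw with ⟨z, hz, rfl⟩
  have hzball : gdist x z < r := hz
  set j := ⌊a / r⌋₊ with hj
  have har : 0 ≤ a / r := div_nonneg ha.1.le hr0.le
  have hjle : (j : ℝ) ≤ a / r := Nat.floor_le har
  have hjgt : a / r < j + 1 := Nat.lt_floor_add_one _
  have hjr : (j : ℝ) * r ≤ a := by
    rw [← le_div_iff₀ hr0]; exact hjle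
  have hjr2 : a < (j : ℝ) * r + r := by
    have := (div_lt_iff₀ hr0).mp hjgt
    linarith
  simp only [Set.mem_iUnion, Finset.mem_range]
  refine ⟨j, ?_, ?_⟩
  · have h1r : a / r ≤ 1 / r := by gcongr; exact ha.2.le
    have h2 : j ≤ ⌊1/r⌋₊ := Nat.le_floor (le_trans hjle h1r)
    omega
  · rw [Metric.mem_ball, dist_eq_norm]
    have hxn : ‖(x : Esp n)‖ = 1 := mem_sphere_zero_iff_norm.mp x.2
    have key : a • (z : Esp n) - ((j : ℝ) * r) • (x : Esp n)
        = a • ((z : Esp n) - (x : Esp n)) + (a - (j : ℝ) * r) • (x : Esp n) := by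
      module
    rw [key]
    calc ‖a • ((z : Esp n) - (x : Esp n)) + (a - (j : ℝ) * r) • (x : Esp n)‖
        ≤ ‖a • ((z : Esp n) - (x : Esp n))‖ + ‖(a - (j : ℝ) * r) • (x : Esp n)‖ :=
          norm_add_le _ _
      _ = a * ‖(z : Esp n) - (x : Esp n)‖ + |a - (j : ℝ) * r| * 1 := by
          rw [norm_smul, norm_smul, Real.norm_eq_abs, Real.norm_eq_abs,
            abs_of_nonneg ha.1.le, hxn]
      _ < 2 * r := by
          have h1 : ‖(z : Esp n) - (x : Esp n)‖ ≤ gdist x z := chord_le_gdist x z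
          have h3 : a * ‖(z : Esp n) - (x : Esp n)‖ ≤ ‖(z : Esp n) - (x : Esp n)‖ := by
            nlinarith [norm_nonneg ((z : Esp n) - (x : Esp n)), ha.1.le, ha.2.le]
          have h4 : |a - (j : ℝ) * r| < r := by
            rw [abs_of_nonneg (by linarith)]; linarith
          linarith

end CapBound
section CapMeasure
open scoped ENNReal
variable {n : ℕ}

/-- unit-ball volume constant -/
def omg (d : ℕ) : ℝ := Real.sqrt π ^ d / Real.Gamma (d / 2 + 1)

lemma omg_pos (d : ℕ) : 0 < omg d := by
  apply div_pos
  · positivity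
  · exact Real.Gamma_pos_of_pos (by positivity)

lemma euclid_ball_vol (c : Esp n) (ρ : ℝ) :
    volume (Metric.ball c ρ) = ENNReal.ofReal ρ ^ (n+1) * ENNReal.ofReal (omg (n+1)) := by
  rw [EuclideanSpace.volume_ball]
  simp [omg, Fintype.card_fin]

/-- the constant in the cap measure upper bound -/
def capC (n : ℕ) : ℝ := (n+1) * 2^(n+2) * omg (n+1)

lemma capC_pos (n : ℕ) : 0 < capC n := by
  exact mul_pos (by positivity) (omg_pos _)

lemma dim_esp : Module.finrank ℝ (Esp n) = n + 1 := by
  simp [finrank_euclideanSpace]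

lemma cap_measure_le {x : Sph n} {r : ℝ} (hr0 : 0 < r) (hr1 : r ≤ 1) :
    sphMeasure n (gball x r) ≤ ENNReal.ofReal (capC n * r ^ n) := by
  have hms : MeasurableSet (gball x r) := (isOpen_gball x r).measurableSet
  rw [sphMeasure, MeasureTheory.Measure.toSphere_apply' _ hms]
  set M := ⌊1/r⌋₊
  have hcover := cone_subset_cover (x := x) hr0
  have hsum : volume (Set.Ioo (0:ℝ) 1 • ((↑) '' gball x r) : Set (Esp n))
      ≤ (M + 1 : ℕ) * (ENNReal.ofReal (2*r) ^ (n+1) * ENNReal.ofReal (omg (n+1))) := by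
    calc volume (Set.Ioo (0:ℝ) 1 • ((↑) '' gball x r) : Set (Esp n))
        ≤ volume (⋃ j ∈ Finset.range (M + 1),
            Metric.ball (((j : ℝ) * r) • (x : Esp n)) (2*r)) := measure_mono hcover
      _ ≤ ∑ j ∈ Finset.range (M + 1),
            volume (Metric.ball (((j : ℝ) * r) • (x : Esp n)) (2*r)) :=
          measure_biUnion_finset_le _ _
      _ = (M + 1 : ℕ) * (ENNReal.ofReal (2*r) ^ (n+1) * ENNReal.ofReal (omg (n+1))) := by
          simp [euclid_ball_vol, Finset.sum_const, mul_comm]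
  have hM : ((M + 1 : ℕ) : ℝ) ≤ 2 / r := by
    have h1 : (M : ℝ) ≤ 1 / r := Nat.floor_le (by positivity)
    have h2 : (1:ℝ) ≤ 1 / r := by
      rw [le_div_iff₀ hr0]; linarith
    have h3 : 2/r = 1/r + 1/r := by ring
    push_cast
    linarith
  calc (Module.finrank ℝ (Esp n) : ℝ≥0∞) * volume (Set.Ioo (0:ℝ) 1 • ((↑) '' gball x r) : Set (Esp n))
      ≤ (n + 1 : ℕ) * ((M + 1 : ℕ) * (ENNReal.ofReal (2*r) ^ (n+1) * ENNReal.ofReal (omg (n+1)))) := by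
        rw [dim_esp]
        exact mul_le_mul_right hsum _
    _ ≤ ENNReal.ofReal ((n+1 : ℕ)) * (ENNReal.ofReal (2/r) * (ENNReal.ofReal (2*r) ^ (n+1) * ENNReal.ofReal (omg (n+1)))) := by
        rw [ENNReal.ofReal_natCast]
        apply mul_le_mul_right
        apply mul_le_mul_left
        rw [← ENNReal.ofReal_natCast]
        exact ENNReal.ofReal_le_ofReal hM
    _ = ENNReal.ofReal ((n+1 : ℕ) * (2/r * ((2*r)^(n+1) * omg (n+1)))) := by
        rw [← ENNReal.ofReal_pow (by positivity), ← ENNReal.ofReal_mul (by positivity),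
          ← ENNReal.ofReal_mul (by positivity), ← ENNReal.ofReal_mul (by positivity)]
    _ = ENNReal.ofReal (capC n * r ^ n) := by
        congr 1
        rw [capC]
        have hrne : r ≠ 0 := hr0.ne'
        field_simp
        push_cast
        ring

end CapMeasure
section TubeBound
open scoped ENNReal
variable {m : ℕ}

def tailSum {m : ℕ} (f : Fin (m+3) → ℝ) : ℝ := ∑ j : Fin (m+1), f j.succ.succ ^ 2

lemma tailSum_nonneg (f : Fin (m+3) → ℝ) : 0 ≤ tailSum f :=
  Finset.sum_nonneg fun _ _ => sq_nonneg _

lemma sum_sq_split (f : Fin (m+3) → ℝ) :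
    ∑ i, f i ^ 2 = f 0 ^ 2 + f 1 ^ 2 + tailSum f := by
  rw [Fin.sum_univ_succ, Fin.sum_univ_succ, Fin.succ_zero_eq_one, tailSum]
  ring

def Tset (m : ℕ) (s : ℝ) : Set (Sph (m+2)) := {x | tailSum ((x : Esp (m+2)) : Fin (m+3) → ℝ) < s^2}

lemma isOpen_Tset (m : ℕ) (s : ℝ) : IsOpen (Tset m s) := by
  apply isOpen_lt _ continuous_const
  apply continuous_finset_sum
  intro j _
  exact ((EuclideanSpace.proj (j.succ.succ : Fin (m+3))).continuous.comp
    continuous_subtype_val).pow 2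

def ballSet (m : ℕ) (ρ : ℝ) : Set (Fin (m+1) → ℝ) := {h | ∑ j, h j ^ 2 < ρ^2}

lemma ballSet_meas (m : ℕ) (ρ : ℝ) : MeasurableSet (ballSet m ρ) := by
  apply MeasurableSet.preimage (measurableSet_Iio (a := ρ^2))
  exact Finset.measurable_sum _ fun j _ => (measurable_pi_apply j).pow_const 2

lemma ballSet_vol {ρ : ℝ} (hρ : 0 < ρ) :
    volume (ballSet m ρ) = ENNReal.ofReal ρ ^ (m+1) * ENNReal.ofReal (omg (m+1)) := by
  have hmp := PiLp.volume_preserving_toLp (Fin (m+1))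
  have heq : ballSet m ρ =
      (WithLp.toLp 2 : (Fin (m+1) → ℝ) → EuclideanSpace ℝ (Fin (m+1))) ⁻¹'
        (Metric.ball (0 : EuclideanSpace ℝ (Fin (m+1))) ρ) := by
    ext h
    simp only [ballSet, Set.mem_setOf_eq, Set.mem_preimage, Metric.mem_ball,
      dist_zero_right]
    rw [EuclideanSpace.norm_eq]
    simp only [WithLp.ofLp_toLp]
    constructor
    · intro hlt
      rw [show (ρ : ℝ) = √(ρ^2) from (Real.sqrt_sq hρ.le).symm]
      apply Real.sqrt_lt_sqrt (by positivity)
      simpa [sq_abs] using hlt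
    · intro hlt
      have := (Real.sqrt_lt' hρ).mp hlt
      simpa [sq_abs] using this
  rw [heq, hmp.measure_preimage measurableSet_ball.nullMeasurableSet,
    EuclideanSpace.volume_ball]
  simp [omg, Fintype.card_fin]

def Eset (m : ℕ) (s : ℝ) : Set (Fin (m+3) → ℝ) :=
  {f | f 0 ∈ Set.Ioo (1/2 : ℝ) (3/4) ∧ f 1 ∈ Set.Ioo (0:ℝ) (1/4) ∧ tailSum f < s^2/4}

lemma measurable_tailSum : Measurable (tailSum (m := m)) := by
  unfold tailSum
  exact Finset.measurable_sum _ fun j _ => (measurable_pi_apply _).pow_const 2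

lemma Eset_meas (m : ℕ) (s : ℝ) : MeasurableSet (Eset m s) := by
  refine MeasurableSet.inter ?_ (MeasurableSet.inter ?_ ?_)
  · exact (measurable_pi_apply 0) measurableSet_Ioo
  · exact (measurable_pi_apply 1) measurableSet_Ioo
  · exact measurableSet_lt measurable_tailSum measurable_const

lemma Eset_vol {s : ℝ} (hs : 0 < s) :
    volume (Eset m s) = ENNReal.ofReal (1/4) * (ENNReal.ofReal (1/4) *
      (ENNReal.ofReal (s/2) ^ (m+1) * ENNReal.ofReal (omg (m+1)))) := by
  have e1 := MeasureTheory.volume_preserving_piFinSuccAbove (fun _ : Fin (m+3) => ℝ) 0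
  have e2 := MeasureTheory.volume_preserving_piFinSuccAbove (fun _ : Fin (m+2) => ℝ) 0
  set Inner2 : Set (Fin (m+2) → ℝ) :=
    (MeasurableEquiv.piFinSuccAbove (fun _ : Fin (m+2) => ℝ) 0) ⁻¹'
      ((Set.Ioo (0:ℝ) (1/4)) ×ˢ ballSet m (s/2)) with hI2
  have hI2meas : MeasurableSet Inner2 :=
    (MeasurableEquiv.piFinSuccAbove _ 0).measurable
      (measurableSet_Ioo.prod (ballSet_meas m (s/2)))
  have heq : Eset m s =
      (MeasurableEquiv.piFinSuccAbove (fun _ : Fin (m+3) => ℝ) 0) ⁻¹'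
        ((Set.Ioo (1/2 : ℝ) (3/4)) ×ˢ Inner2) := by
    ext f
    simp only [Eset, Set.mem_setOf_eq, Set.mem_preimage, Set.mem_prod, hI2,
      MeasurableEquiv.piFinSuccAbove_apply, Fin.removeNth_zero, ballSet, Set.mem_setOf_eq,
      Fin.tail_def]
    constructor
    · rintro ⟨h0, h1, ht⟩
      refine ⟨h0, h1, ?_⟩
      rw [show ((s/2)^2 : ℝ) = s^2/4 by ring]
      simpa [tailSum, Fin.tail] using ht
    · rintro ⟨h0, h1, ht⟩
      rw [show ((s/2)^2 : ℝ) = s^2/4 by ring] at ht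
      exact ⟨h0, h1, by simpa [tailSum, Fin.tail] using ht⟩
  rw [heq, e1.measure_preimage ((measurableSet_Ioo.prod hI2meas)).nullMeasurableSet,
    MeasureTheory.Measure.volume_eq_prod, MeasureTheory.Measure.prod_prod, hI2,
    e2.measure_preimage ((measurableSet_Ioo.prod (ballSet_meas m (s/2)))).nullMeasurableSet,
    MeasureTheory.Measure.volume_eq_prod, MeasureTheory.Measure.prod_prod,
    Real.volume_Ioo, Real.volume_Ioo, ballSet_vol (by positivity)]
  norm_num

end TubeBound
section TubeBound2
open scoped ENNReal Pointwise
variable {m : ℕ}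

lemma Eset_subset_cone {s : ℝ} (hs0 : 0 < s) (hs1 : s ≤ 1) :
    Eset m s ⊆ (WithLp.toLp 2 : (Fin (m+3) → ℝ) → Esp (m+2)) ⁻¹'
      (Set.Ioo (0:ℝ) 1 • ((↑) '' Tset m s) : Set (Esp (m+2))) := by
  rintro f ⟨h0, h1, ht⟩
  set y : Esp (m+2) := WithLp.toLp 2 f with hy
  have htail0 : 0 ≤ tailSum f := tailSum_nonneg f
  have hnsq : ‖y‖^2 = f 0 ^ 2 + f 1 ^ 2 + tailSum f := by
    rw [EuclideanSpace.norm_eq, Real.sq_sqrt (by positivity), ← sum_sq_split f]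
    simp [sq_abs, hy]
  have hs2 : s^2 ≤ 1 := by nlinarith
  have hlt : ‖y‖^2 < 1 := by
    rw [hnsq]
    rcases h0 with ⟨h0a, h0b⟩
    rcases h1 with ⟨h1a, h1b⟩
    nlinarith
  have hgt : (1/4 : ℝ) < ‖y‖^2 := by
    rw [hnsq]
    rcases h0 with ⟨h0a, h0b⟩
    rcases h1 with ⟨h1a, h1b⟩
    nlinarith
  set t := ‖y‖ with hT
  have ht0 : 0 ≤ t := norm_nonneg _
  have htgt : 1/2 < t := by nlinarith
  have htlt : t < 1 := by nlinarith
  have htne : t ≠ 0 := by linarith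
  set z : Esp (m+2) := t⁻¹ • y with hz
  have hzn : ‖z‖ = 1 := by
    rw [hz, norm_smul, Real.norm_eq_abs, abs_of_nonneg (by positivity)]
    field_simp
    exact hT.symm
  have hzS : z ∈ Sph (m+2) := mem_sphere_zero_iff_norm.mpr hzn
  have hzT : (⟨z, hzS⟩ : Sph (m+2)) ∈ Tset m s := by
    show tailSum (z : Fin (m+3) → ℝ) < s^2
    have hcoord : ∀ i : Fin (m+3), (z : Fin (m+3) → ℝ) i = t⁻¹ * f i := fun i => rfl
    have : tailSum (z : Fin (m+3) → ℝ) = t⁻¹^2 * tailSum f := by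
      rw [tailSum, tailSum, Finset.mul_sum]
      exact Finset.sum_congr rfl fun j _ => by rw [hcoord]; ring
    rw [this]
    have hinv : t⁻¹ < 2 := by
      rw [inv_lt_comm₀ (by linarith) (by norm_num)]
      linarith
    have hinv0 : 0 < t⁻¹ := by positivity
    have h4 : t⁻¹^2 < 4 := by nlinarith
    have htf : tailSum f < s^2/4 := ht
    nlinarith [mul_le_mul_of_nonneg_left htf.le (sq_nonneg t⁻¹), sq_nonneg s]
  refine ⟨t, ⟨by linarith, htlt⟩, z, ⟨⟨z, hzS⟩, hzT, rfl⟩, ?_⟩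
  show t • (t⁻¹ • y) = y
  rw [smul_inv_smul₀ htne]

def tubeC (m : ℕ) : ℝ := (m+3) * ((1/16) * ((1/2)^(m+1) * omg (m+1)))

lemma tubeC_pos (m : ℕ) : 0 < tubeC m := by
  have := omg_pos (m+1)
  apply mul_pos (by positivity)
  apply mul_pos (by norm_num)
  positivity

lemma tube_measure_ge {s : ℝ} (hs0 : 0 < s) (hs1 : s ≤ 1) :
    ENNReal.ofReal (tubeC m * s^(m+1)) ≤ sphMeasure (m+2) (Tset m s) := by
  have hms : MeasurableSet (Tset m s) := (isOpen_Tset m s).measurableSet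
  rw [sphMeasure, MeasureTheory.Measure.toSphere_apply' _ hms]
  have hsub := Eset_subset_cone (m := m) hs0 hs1
  have hmono : volume (Eset m s) ≤
      volume (Set.Ioo (0:ℝ) 1 • ((↑) '' Tset m s) : Set (Esp (m+2))) := by
    have hbr : (volume : Measure (Esp (m+2))) ((WithLp.ofLp : Esp (m+2) → (Fin (m+3) → ℝ)) ⁻¹' Eset m s)
        = (volume : Measure (Fin (m+3) → ℝ)) (Eset m s) := by
      exact (PiLp.volume_preserving_ofLp
        (Fin (m+3))).measure_preimage (Eset_meas m s).nullMeasurableSet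
    rw [← hbr]
    exact measure_mono (fun x hx => hsub hx)
  calc ENNReal.ofReal (tubeC m * s^(m+1))
      = (Module.finrank ℝ (Esp (m+2)) : ℝ≥0∞) * volume (Eset m s) := by
        rw [Eset_vol hs0, dim_esp]
        rw [← ENNReal.ofReal_pow (by positivity), ← ENNReal.ofReal_mul (by positivity),
          ← ENNReal.ofReal_mul (by norm_num), ← ENNReal.ofReal_mul (by norm_num),
          ← ENNReal.ofReal_natCast (m+2+1), ← ENNReal.ofReal_mul (by positivity)]
        congr 1
        rw [tubeC]
        push_cast
        field_simp
        ring
    _ ≤ (Module.finrank ℝ (Esp (m+2)) : ℝ≥0∞) *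
          volume (Set.Ioo (0:ℝ) 1 • ((↑) '' Tset m s) : Set (Esp (m+2))) :=
        mul_le_mul_right hmono _

end TubeBound2
section QnormBound
open scoped ENNReal
variable {m : ℕ}

lemma integrable_normQ_sq (n k : ℕ) :
    MeasureTheory.Integrable (fun x => ‖Qfun n k x‖^2) (sphMeasure n) := by
  have hc : Continuous (fun x => ‖Qfun n k x‖^2) := ((continuous_Qfun k).norm).pow 2
  exact MeasureTheory.integrableOn_univ.mp
    (hc.continuousOn.integrableOn_compact isCompact_univ)

lemma coord_sq_add_sq (x : Sph (m+2)) :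
    ((x : Esp (m+2)) 0)^2 + ((x : Esp (m+2)) 1)^2
      = 1 - tailSum ((x : Esp (m+2)) : Fin (m+3) → ℝ) := by
  have h := sum_sq_coords x
  rw [sum_sq_split ((x : Esp (m+2)) : Fin (m+3) → ℝ)] at h
  linarith

/-- the constant in the Qnorm-squared lower bound -/
def qC (m : ℕ) : ℝ := (1/2) * tubeC m * (2 : ℝ) ^ (-(((m:ℝ)+1)/2))

lemma qC_pos (m : ℕ) : 0 < qC m := by
  have h1 := tubeC_pos m
  have h2 : (0:ℝ) < (2 : ℝ) ^ (-(((m:ℝ)+1)/2)) := Real.rpow_pos_of_pos (by norm_num) _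
  exact mul_pos (mul_pos (by norm_num) h1) h2

lemma Qnorm_sq_ge (k : ℕ) (hk : 1 ≤ k) :
    qC m * ((k:ℝ)) ^ (-(((m:ℝ)+1)/2)) ≤
      ∫ x : Sph (m+2), ‖Qfun (m+2) k x‖^2 ∂ sphMeasure (m+2) := by
  have hkR : (1:ℝ) ≤ (k:ℝ) := by exact_mod_cast hk
  have hkpos : (0:ℝ) < k := by linarith
  set s : ℝ := Real.sqrt (1/(2*k)) with hs
  have hs0 : 0 < s := Real.sqrt_pos.mpr (by positivity)
  have hssq : s^2 = 1/(2*k) := Real.sq_sqrt (by positivity)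
  have hs1 : s ≤ 1 := by
    rw [show (1:ℝ) = Real.sqrt 1 from (Real.sqrt_one).symm, hs]
    apply Real.sqrt_le_sqrt
    rw [div_le_one (by positivity)]
    linarith
  -- pointwise lower bound on the tube
  have hpt : ∀ x ∈ Tset m s, (1/2 : ℝ) ≤ ‖Qfun (m+2) k x‖^2 := by
    intro x hx
    rw [norm_Qfun_sq, coord_sq_add_sq]
    have hxt : tailSum ((x : Esp (m+2)) : Fin (m+3) → ℝ) < s^2 := hx
    have htail0 : 0 ≤ tailSum ((x : Esp (m+2)) : Fin (m+3) → ℝ) := tailSum_nonneg _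
    have hb : (1 - 1/(2*k) : ℝ) ^ k ≤ (1 - tailSum ((x : Esp (m+2)) : Fin (m+3) → ℝ))^k := by
      apply pow_le_pow_left₀
      · rw [sub_nonneg, div_le_one (by positivity)]; linarith
      · rw [← hssq]; linarith
    refine le_trans ?_ hb
    have hber := one_add_mul_le_pow (a := -(1/(2*k) : ℝ)) (by
      have : (0:ℝ) < 1/(2*k) := by positivity
      have h1 : (1/(2*k) : ℝ) ≤ 1/2 := by
        apply div_le_div_of_nonneg_left <;> linarith
      linarith) k
    have : (1 : ℝ) + k * (-(1/(2*k))) = 1/2 := by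
      field_simp
      ring
    rw [this] at hber
    calc (1/2 : ℝ) ≤ (1 + -(1/(2*k)))^k := hber
      _ = (1 - 1/(2*k))^k := by ring_nf
  -- measure of the tube
  have hTfin : sphMeasure (m+2) (Tset m s) ≠ ⊤ := measure_ne_top _ _
  have hTR : tubeC m * s^(m+1) ≤ (sphMeasure (m+2) (Tset m s)).toReal := by
    have := tube_measure_ge (m := m) hs0 hs1
    have h2 := ENNReal.toReal_mono hTfin this
    rwa [ENNReal.toReal_ofReal (mul_nonneg (tubeC_pos m).le (by positivity))] at h2
  -- integral chain
  have hint := integrable_normQ_sq (m+2) k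
  have hmeas : MeasurableSet (Tset m s) := (isOpen_Tset m s).measurableSet
  have hstep1 : ∫ x in Tset m s, (1/2 : ℝ) ∂ sphMeasure (m+2) ≤
      ∫ x in Tset m s, ‖Qfun (m+2) k x‖^2 ∂ sphMeasure (m+2) := by
    apply MeasureTheory.setIntegral_mono_on
    · exact MeasureTheory.integrableOn_const (measure_ne_top _ _)
    · exact hint.integrableOn
    · exact hmeas
    · exact hpt
  have hstep2 : ∫ x in Tset m s, ‖Qfun (m+2) k x‖^2 ∂ sphMeasure (m+2) ≤
      ∫ x : Sph (m+2), ‖Qfun (m+2) k x‖^2 ∂ sphMeasure (m+2) := by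
    apply MeasureTheory.setIntegral_le_integral hint
    filter_upwards with x
    simp only [Pi.zero_apply]
    positivity
  have hconst : ∫ x in Tset m s, (1/2 : ℝ) ∂ sphMeasure (m+2)
      = (1/2) * (sphMeasure (m+2) (Tset m s)).toReal := by
    rw [MeasureTheory.setIntegral_const, smul_eq_mul, mul_comm]
    rfl
  -- powers of s
  have hsp : s^(m+1) = (1/(2*(k:ℝ))) ^ (((m:ℝ)+1)/2) := by
    rw [hs, Real.sqrt_eq_rpow, ← Real.rpow_natCast ((1/(2*(k:ℝ))) ^ ((1:ℝ)/2)) (m+1),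
      ← Real.rpow_mul (by positivity)]
    congr 1
    push_cast
    ring
  have hsplit : (1/(2*(k:ℝ))) ^ (((m:ℝ)+1)/2)
      = (2:ℝ) ^ (-(((m:ℝ)+1)/2)) * ((k:ℝ)) ^ (-(((m:ℝ)+1)/2)) := by
    rw [one_div, mul_inv, Real.mul_rpow (by positivity) (by positivity),
      Real.inv_rpow (by norm_num), Real.inv_rpow (by positivity),
      ← Real.rpow_neg (by norm_num), ← Real.rpow_neg (by positivity)]
  calc qC m * ((k:ℝ)) ^ (-(((m:ℝ)+1)/2))
      = (1/2) * (tubeC m * s^(m+1)) := by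
        rw [hsp, hsplit, qC]; ring
    _ ≤ (1/2) * (sphMeasure (m+2) (Tset m s)).toReal := by
        apply mul_le_mul_of_nonneg_left hTR (by norm_num)
    _ = ∫ x in Tset m s, (1/2 : ℝ) ∂ sphMeasure (m+2) := hconst.symm
    _ ≤ ∫ x : Sph (m+2), ‖Qfun (m+2) k x‖^2 ∂ sphMeasure (m+2) := le_trans hstep1 hstep2

end QnormBound
section Final
open scoped ENNReal
variable {m : ℕ}

def bC (m : ℕ) : ℝ := Real.sqrt (qC m)

lemma bC_pos (m : ℕ) : 0 < bC m := Real.sqrt_pos.mpr (qC_pos m)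

lemma Qnorm_ge (k : ℕ) (hk : 1 ≤ k) :
    bC m * ((k:ℝ)) ^ (-(((m:ℝ)+1)/4)) ≤ Qnorm (m+2) k := by
  have hk0 : (0:ℝ) < k := by exact_mod_cast Nat.lt_of_lt_of_le Nat.zero_lt_one hk
  rw [Qnorm]
  calc bC m * (k:ℝ)^(-(((m:ℝ)+1)/4))
      = Real.sqrt (qC m * (k:ℝ)^(-(((m:ℝ)+1)/2))) := by
        rw [Real.sqrt_mul (qC_pos m).le, bC]
        congr 1
        rw [Real.sqrt_eq_rpow, ← Real.rpow_mul hk0.le]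
        congr 1
        ring
    _ ≤ _ := Real.sqrt_le_sqrt (Qnorm_sq_ge k hk)

lemma Qnorm_pos (k : ℕ) (hk : 1 ≤ k) : 0 < Qnorm (m+2) k := by
  have h := Qnorm_ge (m := m) k hk
  have hk0 : (0:ℝ) < k := by exact_mod_cast Nat.lt_of_lt_of_le Nat.zero_lt_one hk
  have : (0:ℝ) < bC m * ((k:ℝ)) ^ (-(((m:ℝ)+1)/4)) :=
    mul_pos (bC_pos m) (Real.rpow_pos_of_pos hk0 _)
  linarith

lemma norm_Qfun_le_one (k : ℕ) (y : Sph (m+2)) : ‖Qfun (m+2) k y‖ ≤ 1 := by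
  have h2 : ‖Qfun (m+2) k y‖^2 ≤ 1 := by
    rw [norm_Qfun_sq, coord_sq_add_sq]
    apply pow_le_one₀
    · have := tailSum_nonneg (((y : Esp (m+2)) : Fin (m+3) → ℝ))
      have h1 := coord_sq_add_sq y
      nlinarith [sq_nonneg ((y : Esp (m+2)) 0), sq_nonneg ((y : Esp (m+2)) 1)]
    · have := tailSum_nonneg (((y : Esp (m+2)) : Fin (m+3) → ℝ))
      linarith
  nlinarith [norm_nonneg (Qfun (m+2) k y)]

lemma Qtilde_sq_le (k : ℕ) (hk : 1 ≤ k) (y : Sph (m+2)) :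
    ‖Qtilde (m+2) k y‖^2 ≤ ((Qnorm (m+2) k)⁻¹)^2 := by
  have hQ := Qnorm_pos (m := m) k hk
  rw [Qtilde, norm_div, Complex.norm_real, Real.norm_eq_abs, abs_of_pos hQ, div_pow,
    div_eq_mul_inv, inv_pow]
  calc ‖Qfun (m+2) k y‖^2 * ((Qnorm (m+2) k)^2)⁻¹
      ≤ 1 * ((Qnorm (m+2) k)^2)⁻¹ := by
        apply mul_le_mul_of_nonneg_right _ (by positivity)
        have := norm_Qfun_le_one (m := m) k y
        nlinarith [norm_nonneg (Qfun (m+2) k y)]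
    _ = ((Qnorm (m+2) k)^2)⁻¹ := by rw [one_mul]

lemma ball_integral_le (k : ℕ) (hk : 1 ≤ k) (x : Sph (m+2)) {r : ℝ}
    (hr0 : 0 < r) (hr1 : r ≤ 1) :
    ∫ y in gball x r, ‖Qtilde (m+2) k y‖^2 ∂ sphMeasure (m+2) ≤
      ((Qnorm (m+2) k)⁻¹)^2 * (capC (m+2) * r^(m+2)) := by
  have hms : MeasurableSet (gball x r) := (isOpen_gball x r).measurableSet
  have hfin : sphMeasure (m+2) (gball x r) < ⊤ := measure_lt_top _ _
  have hbd : ∀ y ∈ gball x r, ‖(‖Qtilde (m+2) k y‖^2)‖ ≤ ((Qnorm (m+2) k)⁻¹)^2 := by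
    intro y _
    rw [Real.norm_eq_abs, abs_of_nonneg (by positivity)]
    exact Qtilde_sq_le k hk y
  have h := MeasureTheory.norm_setIntegral_le_of_norm_le_const hfin hbd
  have hσ : (sphMeasure (m+2) (gball x r)).toReal ≤ capC (m+2) * r^(m+2) := by
    have hle := cap_measure_le (n := m+2) (x := x) hr0 hr1
    have h2 := ENNReal.toReal_mono (by simp) hle
    rwa [ENNReal.toReal_ofReal (mul_nonneg (capC_pos (m+2)).le (by positivity))] at h2
  calc ∫ y in gball x r, ‖Qtilde (m+2) k y‖^2 ∂ sphMeasure (m+2)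
      ≤ ‖∫ y in gball x r, ‖Qtilde (m+2) k y‖^2 ∂ sphMeasure (m+2)‖ := le_abs_self _
    _ ≤ ((Qnorm (m+2) k)⁻¹)^2 * (sphMeasure (m+2) (gball x r)).toReal := h
    _ ≤ ((Qnorm (m+2) k)⁻¹)^2 * (capC (m+2) * r^(m+2)) := by
        apply mul_le_mul_of_nonneg_left hσ (by positivity)

end Final

/-- Estimate (4.3) of the paper: small-ball `L²` bounds for the normalized highest weight
spherical harmonics at scales `k⁻¹ ≤ r ≤ k^{-1/2}`; in particular, at `r = k⁻¹` one has
`sup_x r^{-1/2} ‖Q̃_k‖_{L²(B_r(x))} ≤ C r^{(n-1)/4}`. -/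
theorem highest_weight_small_ball_bounds (n : ℕ) (hn : 2 ≤ n) :
    ∃ C : ℝ, 0 < C ∧ ∀ k : ℕ, 1 ≤ k →
      (∀ (r : ℝ) (x : Sph n), (k : ℝ)⁻¹ ≤ r → r ≤ (k : ℝ) ^ (-(1 : ℝ) / 2) →
        L2g (Qtilde n k) x r ≤ C * r ^ ((n : ℝ) / 2) * (k : ℝ) ^ (((n : ℝ) - 1) / 4)) ∧
      (∀ x : Sph n,
        ((k : ℝ)⁻¹) ^ (-(1 : ℝ) / 2) * L2g (Qtilde n k) x ((k : ℝ)⁻¹) ≤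
          C * ((k : ℝ)⁻¹) ^ (((n : ℝ) - 1) / 4)) := by
  obtain ⟨m, rfl⟩ : ∃ m, n = m + 2 := ⟨n - 2, by omega⟩
  set C : ℝ := Real.sqrt (capC (m+2)) * (bC m)⁻¹ with hC
  have hCpos : 0 < C := mul_pos (Real.sqrt_pos.mpr (capC_pos (m+2))) (inv_pos.mpr (bC_pos m))
  refine ⟨C, hCpos, fun k hk => ?_⟩
  have hk0 : (0:ℝ) < k := by exact_mod_cast Nat.lt_of_lt_of_le Nat.zero_lt_one hk
  have hk1 : (1:ℝ) ≤ k := by exact_mod_cast hk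
  have hexp1 : ((m+2:ℕ):ℝ)/2 = ((m:ℝ)+2)/2 := by push_cast; ring
  have hexp2 : (((m+2:ℕ):ℝ)-1)/4 = ((m:ℝ)+1)/4 := by push_cast; ring
  have main : ∀ (r : ℝ) (x : Sph (m+2)), (k:ℝ)⁻¹ ≤ r → r ≤ (k:ℝ)^(-(1:ℝ)/2) →
      L2g (Qtilde (m+2) k) x r ≤ C * r ^ (((m:ℝ)+2)/2) * (k:ℝ)^(((m:ℝ)+1)/4) := by
    intro r x hrlo hrhi
    have hr0 : 0 < r := lt_of_lt_of_le (by positivity) hrlo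
    have hr1 : r ≤ 1 := by
      refine le_trans hrhi ?_
      have h := Real.rpow_le_rpow_of_exponent_le hk1
        (show (-(1:ℝ)/2 : ℝ) ≤ 0 by norm_num)
      simpa using h
    have hint := ball_integral_le (m := m) k hk x hr0 hr1
    have hQpos := Qnorm_pos (m := m) k hk
    have hsq : √(((Qnorm (m+2) k)⁻¹)^2 * (capC (m+2) * r^(m+2)))
        = (Qnorm (m+2) k)⁻¹ * (√(capC (m+2)) * r ^ (((m:ℝ)+2)/2)) := by
      rw [Real.sqrt_mul (sq_nonneg _), Real.sqrt_sq (by positivity),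
        Real.sqrt_mul (capC_pos (m+2)).le]
      congr 1
      congr 1
      rw [Real.sqrt_eq_rpow, ← Real.rpow_natCast r (m+2), ← Real.rpow_mul hr0.le]
      congr 1
      push_cast
      ring
    have hQinv : (Qnorm (m+2) k)⁻¹ ≤ (bC m)⁻¹ * (k:ℝ)^(((m:ℝ)+1)/4) := by
      have hq := Qnorm_ge (m := m) k hk
      have hpos : 0 < bC m * (k:ℝ)^(-(((m:ℝ)+1)/4)) :=
        mul_pos (bC_pos m) (Real.rpow_pos_of_pos hk0 _)
      have h2 := one_div_le_one_div_of_le hpos hq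
      rw [one_div, one_div, mul_inv] at h2
      rwa [← Real.rpow_neg hk0.le, neg_neg] at h2
    calc L2g (Qtilde (m+2) k) x r
        = √(∫ y in gball x r, ‖Qtilde (m+2) k y‖^2 ∂ sphMeasure (m+2)) := rfl
      _ ≤ √(((Qnorm (m+2) k)⁻¹)^2 * (capC (m+2) * r^(m+2))) := Real.sqrt_le_sqrt hint
      _ = (Qnorm (m+2) k)⁻¹ * (√(capC (m+2)) * r ^ (((m:ℝ)+2)/2)) := hsq
      _ ≤ ((bC m)⁻¹ * (k:ℝ)^(((m:ℝ)+1)/4)) * (√(capC (m+2)) * r ^ (((m:ℝ)+2)/2)) := by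
          apply mul_le_mul_of_nonneg_right hQinv
          positivity
      _ = C * r ^ (((m:ℝ)+2)/2) * (k:ℝ)^(((m:ℝ)+1)/4) := by rw [hC]; ring
  constructor
  · intro r x hrlo hrhi
    rw [show ((m+2:ℕ):ℝ)/2 = ((m:ℝ)+2)/2 from hexp1,
      show (((m+2:ℕ):ℝ)-1)/4 = ((m:ℝ)+1)/4 from hexp2]
    exact main r x hrlo hrhi
  · intro x
    rw [show (((m+2:ℕ):ℝ)-1)/4 = ((m:ℝ)+1)/4 from hexp2]
    have hu0 : (0:ℝ) < (k:ℝ)⁻¹ := by positivity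
    have hrhi : (k:ℝ)⁻¹ ≤ (k:ℝ)^(-(1:ℝ)/2) := by
      rw [show (k:ℝ)⁻¹ = (k:ℝ)^(-(1:ℝ)) by rw [Real.rpow_neg hk0.le, Real.rpow_one]]
      exact Real.rpow_le_rpow_of_exponent_le hk1 (by norm_num)
    have h := main ((k:ℝ)⁻¹) x le_rfl hrhi
    have h2 := mul_le_mul_of_nonneg_left h
      (Real.rpow_nonneg hu0.le (-(1:ℝ)/2) : (0:ℝ) ≤ ((k:ℝ)⁻¹)^(-(1:ℝ)/2))
    refine le_trans h2 (le_of_eq ?_)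
    have hk_u : (k:ℝ)^(((m:ℝ)+1)/4) = ((k:ℝ)⁻¹) ^ (-(((m:ℝ)+1)/4)) := by
      rw [Real.rpow_neg hu0.le, Real.inv_rpow hk0.le, inv_inv]
    rw [hk_u]
    calc ((k:ℝ)⁻¹)^(-(1:ℝ)/2) *
          (C * ((k:ℝ)⁻¹) ^ (((m:ℝ)+2)/2) * ((k:ℝ)⁻¹) ^ (-(((m:ℝ)+1)/4)))
        = C * (((k:ℝ)⁻¹)^(-(1:ℝ)/2) * ((k:ℝ)⁻¹) ^ (((m:ℝ)+2)/2) *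
            ((k:ℝ)⁻¹) ^ (-(((m:ℝ)+1)/4))) := by ring
      _ = C * ((k:ℝ)⁻¹) ^ ((-(1:ℝ)/2) + ((m:ℝ)+2)/2 + (-(((m:ℝ)+1)/4))) := by
          rw [← Real.rpow_add hu0, ← Real.rpow_add hu0]
      _ = C * ((k:ℝ)⁻¹) ^ (((m:ℝ)+1)/4) := by
          congr 1
          ring
end
end
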